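/- arXiv:1905.08837 — 8 statements merged into one kernel-verified Lean document; each statement's English description precedes it below -/
import Mathlib

section
/- Let φ: ℝⁿ → ℝ ∪ {∞} be lower semicontinuous around a point x̄ in its domain and calm from below at x̄ with constant ℓ ≥ 0, i.e., there is a neighborhood U of x̄ with φ(x) ≥ φ(x̄) − ℓ‖x − x̄‖ for all x ∈ U. Then the limiting (Mordukhovich) subdifferential of φ at x̄ intersects the closed ball of radius ℓ centered at the origin; in particular, ∂φ(x̄) ≠ ∅. -/
open Filter Topology Metric Set

noncomputable section

abbrev Euc (n : ℕ) := EuclideanSpace ℝ (Fin n)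

def edom {X : Type*} (φ : X → EReal) : Set X := {x | φ x ≠ ⊤}

section NormedDefs

variable {X Y : Type*} [NormedAddCommGroup X] [NormedSpace ℝ X]
  [NormedAddCommGroup Y] [NormedSpace ℝ Y]

/-- Bouligand (contingent) tangent cone. -/
def tangentConeB (Ω : Set X) (x : X) : Set X :=
  {w | ∃ t : ℕ → ℝ, ∃ wk : ℕ → X, (∀ k, 0 < t k) ∧ Tendsto t atTop (𝓝 0) ∧
      Tendsto wk atTop (𝓝 w) ∧ ∀ k, x + t k • wk k ∈ Ω}

/-- Second-order tangent set. -/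
def secondTangent (Ω : Set X) (x w : X) : Set X :=
  {u | ∃ t : ℕ → ℝ, ∃ uk : ℕ → X, (∀ k, 0 < t k) ∧ Tendsto t atTop (𝓝 0) ∧
      Tendsto uk atTop (𝓝 u) ∧ ∀ k, x + t k • w + ((t k) ^ 2 / 2) • uk k ∈ Ω}

/-- Subderivative (first-order epi-derivative). -/
def subderiv (φ : X → EReal) (x w : X) : EReal :=
  liminf (fun p : ℝ × X => ((p.1⁻¹ : ℝ) : EReal) * (φ (x + p.1 • p.2) - φ x))
    ((𝓝[>] (0:ℝ)) ×ˢ 𝓝 w)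

/-- `f` is twice differentiable at `x`: differentiable nearby and its derivative is
differentiable at `x`. -/
def TwiceDiffAt (f : X → Y) (x : X) : Prop :=
  (∀ᶠ y in 𝓝 x, DifferentiableAt ℝ f y) ∧ DifferentiableAt ℝ (fderiv ℝ f) x

/-- The second derivative of `f` at `x` evaluated at `(w, w)`. -/
def D2 (f : X → Y) (x w : X) : Y := fderiv ℝ (fderiv ℝ f) x w w

/-- Lipschitz continuity of `φ` around `x` relative to its domain, with constant `ℓ`. -/
def LipRelDom (φ : X → EReal) (x : X) (ℓ : ℝ) : Prop :=
  ∃ U ∈ 𝓝 x, ∀ y ∈ U, ∀ z ∈ U, φ y ≠ ⊤ → φ z ≠ ⊤ →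
    φ y ≤ φ z + ((ℓ * ‖y - z‖ : ℝ) : EReal)

/-- Metric subregularity of the mapping `x ↦ f x - D` at `(x, 0)` with constant `κ`:
the metric subregularity qualification condition. -/
def MSQCAt (f : X → Y) (D : Set Y) (x : X) (κ : ℝ) : Prop :=
  0 ≤ κ ∧ ∀ᶠ u in 𝓝 x, Metric.infDist u (f ⁻¹' D) ≤ κ * Metric.infDist (f u) D

/-- Epigraph of an extended-real-valued function. -/
def epiSet (ϑ : Y → EReal) : Set (Y × ℝ) := {p | ϑ p.1 ≤ (p.2 : EReal)}

end NormedDefs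

section InnerDefs

variable {X : Type*} [NormedAddCommGroup X] [InnerProductSpace ℝ X]

/-- Regular (Fréchet) subdifferential. -/
def frechetSubdiff (φ : X → EReal) (x : X) : Set X :=
  {v | ∀ ε : ℝ, 0 < ε → ∀ᶠ y in 𝓝 x,
      φ x + (((inner ℝ v (y - x) : ℝ) - ε * ‖y - x‖ : ℝ) : EReal) ≤ φ y}

/-- Limiting (Mordukhovich) subdifferential. -/
def limSubdiff (φ : X → EReal) (x : X) : Set X :=
  {v | ∃ xk : ℕ → X, ∃ vk : ℕ → X, Tendsto xk atTop (𝓝 x) ∧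
      Tendsto (fun k => φ (xk k)) atTop (𝓝 (φ x)) ∧
      Tendsto vk atTop (𝓝 v) ∧ ∀ k, vk k ∈ frechetSubdiff φ (xk k)}

/-- Proximal subdifferential. -/
def proxSubdiff (φ : X → EReal) (x : X) : Set X :=
  {v | ∃ r > (0:ℝ), ∃ γ > (0:ℝ), ∀ y ∈ Metric.ball x γ,
      φ x + (((inner ℝ v (y - x) : ℝ) - r / 2 * ‖y - x‖ ^ 2 : ℝ) : EReal) ≤ φ y}

/-- Second-order difference quotient. -/
def quadDiff (φ : X → EReal) (x v : X) (t : ℝ) (u : X) : EReal :=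
  ((2 / t ^ 2 : ℝ) : EReal) * (φ (x + t • u) - φ x - ((t * (inner ℝ v u : ℝ) : ℝ) : EReal))

/-- Second subderivative of `φ` at `x` for `v`. -/
def secondSubderiv (φ : X → EReal) (x v w : X) : EReal :=
  liminf (fun p : ℝ × X => quadDiff φ x v p.1 p.2) ((𝓝[>] (0:ℝ)) ×ˢ 𝓝 w)

/-- Parabolic subderivative of `φ` at `x` for `w` with respect to `z`. -/
def parabolicSubderiv (φ : X → EReal) (x w z : X) : EReal :=
  liminf (fun p : ℝ × X =>
      ((2 / p.1 ^ 2 : ℝ) : EReal) *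
        (φ (x + p.1 • w + (p.1 ^ 2 / 2) • p.2) - φ x - (p.1 : EReal) * subderiv φ x w))
    ((𝓝[>] (0:ℝ)) ×ˢ 𝓝 z)

/-- Critical cone of `φ` at `x` for `v`. -/
def critCone (φ : X → EReal) (x v : X) : Set X :=
  {w | subderiv φ x w = ((inner ℝ v w : ℝ) : EReal)}

/-- Convex polyhedral set. -/
def IsPolyhedral (Ω : Set X) : Prop :=
  ∃ (k : ℕ) (c : Fin k → X) (b : Fin k → ℝ), Ω = {x | ∀ i, (inner ℝ (c i) x : ℝ) ≤ b i}

/-- Polar cone. -/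
def polarCone (C : Set X) : Set X := {y | ∀ u ∈ C, (inner ℝ y u : ℝ) ≤ 0}

/-- A piecewise linear-quadratic representation of `ϑ`. -/
structure PLQRepr (ϑ : X → EReal) where
  s : ℕ
  piece : Fin s → Set X
  A : Fin s → (X →L[ℝ] X)
  a : Fin s → X
  cst : Fin s → ℝ
  poly : ∀ i, IsPolyhedral (piece i)
  symm : ∀ i x y, (inner ℝ (A i x) y : ℝ) = (inner ℝ x (A i y) : ℝ)
  dom_eq : edom ϑ = ⋃ i, piece i
  val : ∀ i, ∀ x ∈ piece i,
    ϑ x = ((1 / 2 * (inner ℝ (A i x) x : ℝ) + (inner ℝ (a i) x : ℝ) + cst i : ℝ) : EReal)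

/-- `ϑ` is piecewise linear-quadratic. -/
def IsPLQ (ϑ : X → EReal) : Prop := Nonempty (PLQRepr ϑ)

/-- Twice epi-differentiability of `φ` at `x` for `v`, via the recovery-sequence
characterization of epi-convergence of second-order difference quotients. -/
def TwiceEpiDiffAt (φ : X → EReal) (x v : X) : Prop :=
  ∀ w : X, ∀ t : ℕ → ℝ, (∀ k, 0 < t k) → Tendsto t atTop (𝓝 0) →
    ∃ wk : ℕ → X, Tendsto wk atTop (𝓝 w) ∧
      Tendsto (fun k => quadDiff φ x v (t k) (wk k)) atTop (𝓝 (secondSubderiv φ x v w))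

end InnerDefs

/-- Convexity for extended-real-valued functions. -/
def ERealConvexOn {X : Type*} [AddCommGroup X] [Module ℝ X] (φ : X → EReal) : Prop :=
  ∀ x y : X, ∀ t : ℝ, 0 ≤ t → t ≤ 1 →
    φ (t • x + (1 - t) • y) ≤ (t : EReal) * φ x + ((1 - t : ℝ) : EReal) * φ y

/-- The Lagrange multiplier set associated with `(x, v)` for the composition `ϑ ∘ f`. -/
def multSet {n m : ℕ} (f : Euc n → Euc m) (ϑ : Euc m → EReal) (x : Euc n) (v : Euc n) :
    Set (Euc m) :=
  {lam | lam ∈ limSubdiff ϑ (f x) ∧ ContinuousLinearMap.adjoint (fderiv ℝ f x) lam = v}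

lemma lsc_exists_min {n : ℕ} {K : Set (Euc n)} (hK : IsCompact K) (hne : K.Nonempty)
    {ψ : Euc n → EReal} (hψ : ∀ x ∈ K, LowerSemicontinuousWithinAt ψ K x) :
    ∃ x ∈ K, ∀ y ∈ K, ψ x ≤ ψ y := by
  set m : EReal := sInf (ψ '' K) with hm
  have hmle : ∀ y ∈ K, m ≤ ψ y := fun y hy => sInf_le ⟨y, hy, rfl⟩
  by_cases htop : ∃ y ∈ K, ψ y < ⊤
  · obtain ⟨y0, hy0, hy0t⟩ := htop
    have hmt : m < ⊤ := lt_of_le_of_lt (hmle y0 hy0) hy0t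
    obtain ⟨b, hbanti, hbmem, hbtend⟩ := exists_seq_strictAnti_tendsto' hmt
    have hxs : ∀ j : ℕ, ∃ x ∈ K, ψ x < b j := by
      intro j
      by_contra hcon
      push_neg at hcon
      have : b j ≤ m := le_sInf (by rintro z ⟨x, hx, rfl⟩; exact hcon x hx)
      exact absurd (hbmem j).1 (not_lt.2 this)
    choose xs hxsK hxsb using hxs
    obtain ⟨x, hxK, σ, hσ, hconv⟩ := hK.tendsto_subseq hxsK
    refine ⟨x, hxK, fun y hy => ?_⟩
    have hwithin : Tendsto (fun j => xs (σ j)) atTop (𝓝[K] x) :=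
      tendsto_nhdsWithin_iff.2 ⟨hconv, Eventually.of_forall fun j => hxsK (σ j)⟩
    have h1 : ψ x ≤ liminf ψ (𝓝[K] x) := (hψ x hxK).le_liminf
    have h2 : liminf ψ (𝓝[K] x) ≤ liminf (fun j => ψ (xs (σ j))) atTop :=
      liminf_le_liminf_of_le hwithin
    have h3 : liminf (fun j => ψ (xs (σ j))) atTop ≤ liminf (fun j => b (σ j)) atTop :=
      liminf_le_liminf (Eventually.of_forall fun j => (hxsb (σ j)).le)
    have h4 : liminf (fun j => b (σ j)) atTop = m :=
      (hbtend.comp (StrictMono.tendsto_atTop hσ)).liminf_eq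
    calc ψ x ≤ m := h1.trans (h2.trans (h3.trans h4.le))
    _ ≤ ψ y := hmle y hy
  · push_neg at htop
    obtain ⟨x, hx⟩ := hne
    exact ⟨x, hx, fun y hy => le_top.trans (htop y hy)⟩

lemma pen_hasFDerivAt {n : ℕ} (xb x₀ : Euc n) {δ c : ℝ} (hδ : 0 < δ) :
    HasFDerivAt (fun x : Euc n => c * Real.sqrt (‖x - xb‖ ^ 2 + δ ^ 2))
      ((c / Real.sqrt (‖x₀ - xb‖ ^ 2 + δ ^ 2)) • innerSL ℝ (x₀ - xb)) x₀ := by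
  have hspos : 0 < ‖x₀ - xb‖ ^ 2 + δ ^ 2 := by positivity
  have h1 : HasFDerivAt (fun x : Euc n => x - xb) (ContinuousLinearMap.id ℝ (Euc n)) x₀ :=
    (hasFDerivAt_id x₀).sub_const xb
  have hq : HasFDerivAt (fun x : Euc n => ‖x - xb‖ ^ 2 + δ ^ 2)
      (2 • innerSL ℝ (x₀ - xb)) x₀ := by
    have := h1.norm_sq.add_const (δ ^ 2)
    simpa using this
  have hsq := (hq.sqrt hspos.ne').const_mul c
  refine hsq.congr_fderiv ?_
  have hs : Real.sqrt (‖x₀ - xb‖ ^ 2 + δ ^ 2) ≠ 0 := by positivity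
  ext w
  simp [ContinuousLinearMap.smul_apply, smul_smul]
  field_simp

set_option maxHeartbeats 1000000 in
lemma key_step {n : ℕ} (φ : Euc n → EReal) (xb : Euc n) (ℓ r : ℝ) (hl : 0 ≤ ℓ)
    (hbot : ∀ x, φ x ≠ ⊥) (hdom : φ xb ≠ ⊤)
    (hlsc : ∀ y ∈ closedBall xb r, LowerSemicontinuousAt φ y)
    (hcalm : ∀ x ∈ closedBall xb r, φ xb ≤ φ x + ((ℓ * ‖x - xb‖ : ℝ) : EReal))
    {ε : ℝ} (hε : 0 < ε) (hεr : (ℓ + 1) * ε < r) (hε1 : ε ≤ 1) :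
    ∃ x v, ‖x - xb‖ ≤ (ℓ + 1) * ε ∧ v ∈ frechetSubdiff φ x ∧ ‖v‖ ≤ ℓ + ε ∧ φ x ≤ φ xb := by
  have hr : 0 < r := lt_of_le_of_lt (by nlinarith) hεr
  set δ : ℝ := ε ^ 2 with hδdef
  have hδ : 0 < δ := by positivity
  set c : ℝ := ℓ + ε with hcdef
  have hc : 0 < c := by positivity
  set h : Euc n → ℝ := fun x => c * Real.sqrt (‖x - xb‖ ^ 2 + δ ^ 2) with hhdef
  set K : Set (Euc n) := closedBall xb r with hKdef
  set ψ : Euc n → EReal := fun x => φ x + ((h x : ℝ) : EReal) with hψdef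
  have hxbK : xb ∈ K := mem_closedBall_self hr.le
  -- lower semicontinuity of ψ on K
  have hcont_h : Continuous h := by
    apply Continuous.mul continuous_const
    exact (((continuous_id.sub continuous_const).norm.pow 2).add continuous_const).sqrt
  have hψlsc : ∀ x ∈ K, LowerSemicontinuousWithinAt ψ K x := by
    intro x hx
    have h1 : LowerSemicontinuousWithinAt φ K x :=
      (hlsc x hx).lowerSemicontinuousWithinAt K
    have h2 : LowerSemicontinuousWithinAt (fun x => ((h x : ℝ) : EReal)) K x :=
      ((continuous_coe_real_ereal.comp hcont_h).lowerSemicontinuous.lowerSemicontinuousAt x).lowerSemicontinuousWithinAt K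
    exact h1.add' h2 (EReal.continuousAt_add (Or.inr (by simp)) (Or.inl (hbot x)))
  obtain ⟨x₀, hx₀K, hmin⟩ := lsc_exists_min (isCompact_closedBall xb r) ⟨xb, hxbK⟩ hψlsc
  set A : ℝ := (φ xb).toReal with hAdef
  have hA : ((A : ℝ) : EReal) = φ xb := EReal.coe_toReal hdom (hbot xb)
  set t : ℝ := ‖x₀ - xb‖ with htdef
  set s : ℝ := Real.sqrt (t ^ 2 + δ ^ 2) with hsdef
  have ht0 : 0 ≤ t := norm_nonneg _
  have hspos : 0 < s := Real.sqrt_pos.2 (by nlinarith)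
  have hts : t ≤ s := by
    rw [hsdef]
    calc t = Real.sqrt (t ^ 2) := by rw [Real.sqrt_sq ht0]
    _ ≤ _ := Real.sqrt_le_sqrt (by nlinarith [sq_nonneg δ])
  have hδs : δ ≤ s := by
    rw [hsdef]
    calc δ = Real.sqrt (δ ^ 2) := by rw [Real.sqrt_sq hδ.le]
    _ ≤ _ := Real.sqrt_le_sqrt (by nlinarith [sq_nonneg t])
  have hhx₀ : h x₀ = c * s := rfl
  have hhxb : h xb = c * δ := by
    simp [hhdef, Real.sqrt_sq hδ.le]
  -- ψ x₀ ≤ ψ xb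
  have hminxb : ψ x₀ ≤ ψ xb := hmin xb hxbK
  have hψxb : ψ xb = ((A + c * δ : ℝ) : EReal) := by
    rw [hψdef]; simp only [hhxb]; rw [← hA, ← EReal.coe_add]
  -- φ x₀ is finite
  have hψxbne : ψ xb ≠ ⊤ := by rw [hψxb]; exact EReal.coe_ne_top _
  have hx₀top : φ x₀ ≠ ⊤ := by
    intro htop
    apply hψxbne
    rw [eq_top_iff]
    refine le_trans ?_ hminxb
    have : ψ x₀ = ⊤ := by
      show φ x₀ + ((h x₀ : ℝ) : EReal) = ⊤
      rw [htop]; exact EReal.top_add_coe _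
    rw [this]
  set B : ℝ := (φ x₀).toReal with hBdef
  have hB : ((B : ℝ) : EReal) = φ x₀ := EReal.coe_toReal hx₀top (hbot x₀)
  have hreal1 : B + c * s ≤ A + c * δ := by
    have h0 : ((B + c * s : ℝ) : EReal) ≤ ((A + c * δ : ℝ) : EReal) := by
      rw [EReal.coe_add, hB]
      exact hψxb ▸ hminxb
    exact EReal.coe_le_coe_iff.1 h0
  have hreal2 : A ≤ B + ℓ * t := by
    have h1 := hcalm x₀ hx₀K
    rw [← hA, ← hB, ← htdef, ← EReal.coe_add] at h1
    exact EReal.coe_le_coe_iff.1 h1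
  have hct : c * t = ℓ * t + ε * t := by rw [hcdef]; ring
  have hcd : c * δ = (ℓ + ε) * ε ^ 2 := by rw [hcdef, hδdef]
  have h5 : c * t ≤ c * s := mul_le_mul_of_nonneg_left hts hc.le
  have h6 : ε * t ≤ (ℓ + ε) * ε ^ 2 := by linarith
  have htb : t ≤ (ℓ + 1) * ε := by
    have h7 : ε * t ≤ ε * ((ℓ + 1) * ε) := by nlinarith
    exact le_of_mul_le_mul_left h7 hε
  have hBA : B ≤ A := by
    have h8 : c * δ ≤ c * s := mul_le_mul_of_nonneg_left hδs hc.le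
    linarith
  have hφle : φ x₀ ≤ φ xb := by rw [← hA, ← hB]; exact_mod_cast hBA
  -- the subgradient
  set v : Euc n := -((c / s) • (x₀ - xb)) with hvdef
  have hvnorm : ‖v‖ ≤ ℓ + ε := by
    rw [hvdef, norm_neg, norm_smul, Real.norm_eq_abs, abs_of_pos (div_pos hc hspos)]
    rw [← htdef, ← hcdef]
    rw [div_mul_eq_mul_div, div_le_iff₀ hspos]
    nlinarith
  have hx₀ball : x₀ ∈ ball xb r := by
    rw [mem_ball, dist_eq_norm, ← htdef]; exact lt_of_le_of_lt htb hεr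
  refine ⟨x₀, v, htb, ?_, hvnorm, hφle⟩
  -- Fréchet subdifferential membership
  intro ε' hε'
  have hder := pen_hasFDerivAt xb x₀ (δ := δ) (c := c) hδ
  have hlo := hder.isLittleO.def hε'
  have hball : ∀ᶠ y in 𝓝 x₀, y ∈ ball xb r := isOpen_ball.mem_nhds hx₀ball
  filter_upwards [hlo, hball] with y hy hyball
  by_cases hytop : φ y = ⊤
  · rw [hytop]; exact le_top
  set C : ℝ := (φ y).toReal with hCdef
  have hC : ((C : ℝ) : EReal) = φ y := EReal.coe_toReal hytop (hbot y)
  have hminy : ψ x₀ ≤ ψ y := hmin y (ball_subset_closedBall hyball)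
  have hrealy : B + h x₀ ≤ C + h y := by
    have : ((B + h x₀ : ℝ) : EReal) ≤ ((C + h y : ℝ) : EReal) := by
      rw [EReal.coe_add, EReal.coe_add, hB, hC]
      exact hminy
    exact EReal.coe_le_coe_iff.1 this
  set d : Euc n := y - x₀ with hddef
  have hinner : (inner ℝ v d : ℝ) = -((c / s) * (inner ℝ (x₀ - xb) d : ℝ)) := by
    rw [hvdef]
    rw [inner_neg_left, real_inner_smul_left]
  have hLd : ((c / Real.sqrt (‖x₀ - xb‖ ^ 2 + δ ^ 2)) • innerSL ℝ (x₀ - xb)) d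
      = (c / s) * (inner ℝ (x₀ - xb) d : ℝ) := by
    simp only [ContinuousLinearMap.smul_apply, innerSL_apply_apply, smul_eq_mul]
    rfl
  rw [hLd, Real.norm_eq_abs, abs_le] at hy
  have hyy : h y - h x₀ - (c / s) * (inner ℝ (x₀ - xb) d : ℝ) ≤ ε' * ‖d‖ := hy.2
  rw [hhx₀] at hrealy
  rw [hhx₀] at hyy
  rw [← hB, ← hC, ← EReal.coe_add]
  apply EReal.coe_le_coe_iff.2
  rw [hinner]
  set I : ℝ := (inner ℝ (x₀ - xb) d : ℝ) with hIdef
  set E : ℝ := ε' * ‖d‖ with hEdef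
  set Hy : ℝ := h y with hHydef
  nlinarith [hrealy, hyy, hy]

/-- existence of subgradients under calmness from below. -/
theorem stmt0 {n : ℕ} (φ : Euc n → EReal) (xb : Euc n) (ℓ : ℝ)
    (hl : 0 ≤ ℓ) (hbot : ∀ x, φ x ≠ ⊥) (hdom : φ xb ≠ ⊤)
    (hlsc : ∃ U ∈ 𝓝 xb, ∀ y ∈ U, LowerSemicontinuousAt φ y)
    (hcalm : ∀ᶠ x in 𝓝 xb, φ xb ≤ φ x + ((ℓ * ‖x - xb‖ : ℝ) : EReal)) :
    ∃ v ∈ limSubdiff φ xb, ‖v‖ ≤ ℓ := by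
  obtain ⟨U, hU, hlscU⟩ := hlsc
  have hUW : U ∩ {x | φ xb ≤ φ x + ((ℓ * ‖x - xb‖ : ℝ) : EReal)} ∈ 𝓝 xb :=
    inter_mem hU hcalm
  obtain ⟨r, hrpos, hball⟩ := Metric.mem_nhds_iff.1 hUW
  set ρ : ℝ := r / 2 with hρdef
  have hρpos : 0 < ρ := by positivity
  have hcb : closedBall xb ρ ⊆ U ∩ {x | φ xb ≤ φ x + ((ℓ * ‖x - xb‖ : ℝ) : EReal)} := by
    intro x hx
    apply hball
    rw [mem_ball]
    exact lt_of_le_of_lt hx (by rw [hρdef]; linarith)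
  have hlsc' : ∀ y ∈ closedBall xb ρ, LowerSemicontinuousAt φ y :=
    fun y hy => hlscU y (hcb hy).1
  have hcalm' : ∀ x ∈ closedBall xb ρ, φ xb ≤ φ x + ((ℓ * ‖x - xb‖ : ℝ) : EReal) :=
    fun x hx => (hcb hx).2
  set c0 : ℝ := min 1 (ρ / (2 * (ℓ + 1))) with hc0def
  have hc0pos : 0 < c0 := lt_min one_pos (by positivity)
  have hc01 : c0 ≤ 1 := min_le_left _ _
  set εs : ℕ → ℝ := fun k => c0 / ((k : ℝ) + 1) with hεsdef
  have hεpos : ∀ k, 0 < εs k := fun k => div_pos hc0pos (by positivity)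
  have hεle : ∀ k, εs k ≤ c0 := by
    intro k
    apply div_le_self hc0pos.le
    have : (0 : ℝ) ≤ (k : ℝ) := Nat.cast_nonneg k
    linarith
  have hε1 : ∀ k, εs k ≤ 1 := fun k => (hεle k).trans hc01
  have hεr : ∀ k, (ℓ + 1) * εs k < ρ := by
    intro k
    have h2 : c0 ≤ ρ / (2 * (ℓ + 1)) := min_le_right _ _
    have h3 : (ℓ + 1) * εs k ≤ (ℓ + 1) * (ρ / (2 * (ℓ + 1))) :=
      mul_le_mul_of_nonneg_left ((hεle k).trans h2) (by linarith)
    have h4 : (ℓ + 1) * (ρ / (2 * (ℓ + 1))) = ρ / 2 := by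
      field_simp
    rw [h4] at h3
    linarith
  have hεs0 : Tendsto εs atTop (𝓝 0) := by
    have h1 : Tendsto (fun k : ℕ => (k : ℝ) + 1) atTop atTop :=
      tendsto_atTop_add_const_right atTop 1 tendsto_natCast_atTop_atTop
    simpa [hεsdef] using Tendsto.div_atTop (tendsto_const_nhds (x := c0)) h1
  have hkey := fun k => key_step φ xb ℓ ρ hl hbot hdom hlsc' hcalm' (hεpos k) (hεr k) (hε1 k)
  choose xs vs hxsb hvfs hvnorm hφle using hkey
  have hxsmem : ∀ k, xs k ∈ closedBall xb ρ := by
    intro k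
    rw [mem_closedBall, dist_eq_norm]
    exact (hxsb k).trans (hεr k).le
  have hbound0 : Tendsto (fun k => (ℓ + 1) * εs k) atTop (𝓝 0) := by
    simpa using hεs0.const_mul (ℓ + 1)
  have hxs_tend : Tendsto xs atTop (𝓝 xb) := by
    rw [tendsto_iff_dist_tendsto_zero]
    apply squeeze_zero (fun k => dist_nonneg)
      (fun k => by rw [dist_eq_norm]; exact hxsb k) hbound0
  have hvball : ∀ k, vs k ∈ closedBall (0 : Euc n) (ℓ + 1) := by
    intro k
    rw [mem_closedBall, dist_zero_right]
    exact (hvnorm k).trans (by linarith [hε1 k])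
  obtain ⟨v, _, σ, hσ, hvconv⟩ :=
    (isCompact_closedBall (0 : Euc n) (ℓ + 1)).tendsto_subseq hvball
  set Ar : ℝ := (φ xb).toReal with hArdef
  have hAr : ((Ar : ℝ) : EReal) = φ xb := EReal.coe_toReal hdom (hbot xb)
  have hlow : ∀ k, ((Ar - ℓ * ((ℓ + 1) * εs (σ k)) : ℝ) : EReal) ≤ φ (xs (σ k)) := by
    intro k
    by_cases htop : φ (xs (σ k)) = ⊤
    · rw [htop]; exact le_top
    have hBr : (((φ (xs (σ k))).toReal : ℝ) : EReal) = φ (xs (σ k)) :=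
      EReal.coe_toReal htop (hbot _)
    have h1 := hcalm' (xs (σ k)) (hxsmem (σ k))
    rw [← hAr, ← hBr, ← EReal.coe_add] at h1
    have h2 : Ar ≤ (φ (xs (σ k))).toReal + ℓ * ‖xs (σ k) - xb‖ := EReal.coe_le_coe_iff.1 h1
    have h3 : ℓ * ‖xs (σ k) - xb‖ ≤ ℓ * ((ℓ + 1) * εs (σ k)) :=
      mul_le_mul_of_nonneg_left (hxsb (σ k)) hl
    rw [← hBr]
    exact EReal.coe_le_coe_iff.2 (by linarith)
  have hlowtend : Tendsto (fun k => ((Ar - ℓ * ((ℓ + 1) * εs (σ k)) : ℝ) : EReal))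
      atTop (𝓝 (φ xb)) := by
    rw [← hAr]
    apply (continuous_coe_real_ereal.tendsto Ar).comp
    have h0 : Tendsto (fun k => Ar - ℓ * ((ℓ + 1) * εs (σ k))) atTop
        (𝓝 (Ar - ℓ * ((ℓ + 1) * 0))) :=
      tendsto_const_nhds.sub (((hεs0.comp hσ.tendsto_atTop).const_mul (ℓ + 1)).const_mul ℓ)
    simpa using h0
  have hφtend : Tendsto (fun k => φ (xs (σ k))) atTop (𝓝 (φ xb)) :=
    tendsto_of_tendsto_of_tendsto_of_le_of_le hlowtend tendsto_const_nhds
      hlow (fun k => hφle (σ k))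
  refine ⟨v, ⟨fun k => xs (σ k), fun k => vs (σ k),
    hxs_tend.comp hσ.tendsto_atTop, hφtend, hvconv, fun k => hvfs (σ k)⟩, ?_⟩
  have hnorm_tend : Tendsto (fun k => ‖vs (σ k)‖ - εs (σ k)) atTop (𝓝 (‖v‖ - 0)) :=
    ((continuous_norm.tendsto v).comp hvconv).sub (hεs0.comp hσ.tendsto_atTop)
  rw [sub_zero] at hnorm_tend
  exact le_of_tendsto hnorm_tend (Eventually.of_forall fun k => by linarith [hvnorm (σ k)])
end
end

section
/- Every convex piecewise linear-quadratic function φ: ℝⁿ → ℝ ∪ {∞} is calm from below at every point of its domain; consequently ∂φ(x̄) ≠ ∅ for every x̄ ∈ dom φ. -/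
open Filter Topology Metric Set

noncomputable section

section Aux

lemma IsPolyhedral.isClosed' {X : Type*} [NormedAddCommGroup X] [InnerProductSpace ℝ X]
    {Ω : Set X} (h : IsPolyhedral Ω) : IsClosed Ω := by
  obtain ⟨k, c, b, rfl⟩ := h
  have : {x : X | ∀ i, (inner ℝ (c i) x : ℝ) ≤ b i}
      = ⋂ i, {x : X | (inner ℝ (c i) x : ℝ) ≤ b i} := by
    ext x; simp
  rw [this]
  exact isClosed_iInter fun i =>
    isClosed_le (Continuous.inner continuous_const continuous_id) continuous_const

lemma quad_lip {n : ℕ} (A : Euc n →L[ℝ] Euc n) (a : Euc n) (x y : Euc n) :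
    |(1/2 * (inner ℝ (A x) x : ℝ) + (inner ℝ a x : ℝ))
      - (1/2 * (inner ℝ (A y) y : ℝ) + (inner ℝ a y : ℝ))|
      ≤ (1/2 * ‖A‖ * (‖x‖ + ‖y‖) + ‖a‖) * ‖x - y‖ := by
  have key : (1/2 * (inner ℝ (A x) x : ℝ) + (inner ℝ a x : ℝ))
      - (1/2 * (inner ℝ (A y) y : ℝ) + (inner ℝ a y : ℝ))
      = 1/2 * ((inner ℝ (A x) (x - y) : ℝ) + (inner ℝ (A (x - y)) y : ℝ))
        + (inner ℝ a (x - y) : ℝ) := by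
    rw [inner_sub_right, map_sub, inner_sub_left, inner_sub_right]; ring
  have h1 : |(inner ℝ (A x) (x - y) : ℝ)| ≤ ‖A‖ * ‖x‖ * ‖x - y‖ :=
    (abs_real_inner_le_norm _ _).trans
      (mul_le_mul_of_nonneg_right (A.le_opNorm x) (norm_nonneg _))
  have h2 : |(inner ℝ (A (x - y)) y : ℝ)| ≤ ‖A‖ * ‖x - y‖ * ‖y‖ :=
    (abs_real_inner_le_norm _ _).trans
      (mul_le_mul_of_nonneg_right (A.le_opNorm (x - y)) (norm_nonneg _))
  have h3 : |(inner ℝ a (x - y) : ℝ)| ≤ ‖a‖ * ‖x - y‖ := abs_real_inner_le_norm _ _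
  rw [key]
  have habs : |1/2 * ((inner ℝ (A x) (x - y) : ℝ) + (inner ℝ (A (x - y)) y : ℝ))
      + (inner ℝ a (x - y) : ℝ)|
      ≤ 1/2 * (|(inner ℝ (A x) (x - y) : ℝ)| + |(inner ℝ (A (x - y)) y : ℝ)|)
        + |(inner ℝ a (x - y) : ℝ)| := by
    calc _ ≤ |1/2 * ((inner ℝ (A x) (x - y) : ℝ) + (inner ℝ (A (x - y)) y : ℝ))|
        + |(inner ℝ a (x - y) : ℝ)| := abs_add_le _ _
      _ ≤ _ := by
          rw [abs_mul]
          have := abs_add_le (inner ℝ (A x) (x - y) : ℝ) (inner ℝ (A (x - y)) y : ℝ)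
          rw [show |(1/2 : ℝ)| = 1/2 by norm_num]
          nlinarith
  nlinarith [habs, h1, h2, h3]

/-- Calmness from below for PLQ functions (no convexity needed). -/
lemma plq_calm {n : ℕ} (φ : Euc n → EReal) (hplq : IsPLQ φ) (xb : Euc n) (hxb : φ xb ≠ ⊤) :
    ∃ ℓ : ℝ, 0 ≤ ℓ ∧ ∀ᶠ x in 𝓝 xb, φ xb ≤ φ x + ((ℓ * ‖x - xb‖ : ℝ) : EReal) := by
  obtain ⟨R⟩ := hplq
  set ℓ : ℝ := ∑ i : Fin R.s, (‖R.A i‖ * (‖xb‖ + 1) + ‖R.a i‖) with hℓdef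
  have hterm : ∀ i : Fin R.s, 0 ≤ ‖R.A i‖ * (‖xb‖ + 1) + ‖R.a i‖ := by
    intro i; positivity
  have hℓ0 : 0 ≤ ℓ := Finset.sum_nonneg fun i _ => hterm i
  have hle : ∀ i : Fin R.s, ‖R.A i‖ * (‖xb‖ + 1) + ‖R.a i‖ ≤ ℓ := fun i =>
    Finset.single_le_sum (fun j _ => hterm j) (Finset.mem_univ i)
  refine ⟨ℓ, hℓ0, ?_⟩
  have hav : ∀ᶠ x in 𝓝 xb, ∀ i, xb ∉ R.piece i → x ∉ R.piece i := by
    rw [eventually_all]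
    intro i
    by_cases h : xb ∈ R.piece i
    · filter_upwards with x hx; exact absurd h hx
    · filter_upwards [((R.poly i).isClosed'.isOpen_compl).eventually_mem h] with x hx _
      exact hx
  filter_upwards [hav, Metric.ball_mem_nhds xb one_pos] with x hx hxball
  by_cases hxt : φ x = ⊤
  · rw [hxt, EReal.top_add_of_ne_bot (EReal.coe_ne_bot _)]; exact le_top
  · have hxdom : x ∈ edom φ := hxt
    rw [R.dom_eq] at hxdom
    obtain ⟨j, hj⟩ := Set.mem_iUnion.mp hxdom
    have hxbj : xb ∈ R.piece j := by
      by_contra h; exact hx j h hj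
    rw [R.val j x hj, R.val j xb hxbj, ← EReal.coe_add, EReal.coe_le_coe_iff]
    have hq := quad_lip (R.A j) (R.a j) xb x
    have hxn : ‖x‖ ≤ ‖xb‖ + 1 := by
      have hd : dist x xb < 1 := Metric.mem_ball.mp hxball
      rw [dist_eq_norm] at hd
      have := norm_sub_norm_le x xb
      linarith
    have h1 : (1/2 * (inner ℝ (R.A j xb) xb : ℝ) + (inner ℝ (R.a j) xb : ℝ))
        - (1/2 * (inner ℝ (R.A j x) x : ℝ) + (inner ℝ (R.a j) x : ℝ))
        ≤ (1/2 * ‖R.A j‖ * (‖xb‖ + ‖x‖) + ‖R.a j‖) * ‖xb - x‖ :=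
      (le_abs_self _).trans hq
    rw [norm_sub_rev] at h1
    have hcoef : 1/2 * ‖R.A j‖ * (‖xb‖ + ‖x‖) + ‖R.a j‖ ≤ ℓ := by
      have := hle j
      nlinarith [norm_nonneg (R.A j), norm_nonneg xb]
    have h2 : (1/2 * ‖R.A j‖ * (‖xb‖ + ‖x‖) + ‖R.a j‖) * ‖x - xb‖ ≤ ℓ * ‖x - xb‖ :=
      mul_le_mul_of_nonneg_right hcoef (norm_nonneg _)
    linarith

end Aux

/-- Local calmness from below globalizes for convex functions. -/
lemma calm_global {n : ℕ} (φ : Euc n → EReal) (hbot : ∀ x, φ x ≠ ⊥)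
    (hconv : ERealConvexOn φ) (xb : Euc n) (hxb : φ xb ≠ ⊤) (ℓ : ℝ)
    (hcalm : ∀ᶠ x in 𝓝 xb, φ xb ≤ φ x + ((ℓ * ‖x - xb‖ : ℝ) : EReal)) :
    ∀ y, φ y ≠ ⊤ → (φ xb).toReal ≤ (φ y).toReal + ℓ * ‖y - xb‖ := by
  intro y hy
  set m := (φ xb).toReal with hmdef
  set r := (φ y).toReal with hrdef
  have hm : φ xb = (m : EReal) := (EReal.coe_toReal hxb (hbot xb)).symm
  have hr : φ y = (r : EReal) := (EReal.coe_toReal hy (hbot y)).symm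
  have hcont : Tendsto (fun t : ℝ => t • y + (1 - t) • xb) (𝓝 0) (𝓝 xb) := by
    have : Continuous (fun t : ℝ => t • y + (1 - t) • xb) :=
      (continuous_id.smul continuous_const).add
        ((continuous_const.sub continuous_id).smul continuous_const)
    have h0 : (fun t : ℝ => t • y + (1 - t) • xb) 0 = xb := by simp
    simpa [h0] using this.tendsto 0
  have hev : ∀ᶠ t : ℝ in 𝓝 0,
      φ xb ≤ φ (t • y + (1 - t) • xb)
        + ((ℓ * ‖(t • y + (1 - t) • xb) - xb‖ : ℝ) : EReal) :=
    hcont.eventually hcalm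
  have h01 : ∀ᶠ t : ℝ in 𝓝 (0:ℝ), t < 1 := eventually_lt_nhds one_pos
  have hpos : ∀ᶠ t : ℝ in 𝓝[>] (0:ℝ), 0 < t := eventually_mem_nhdsWithin
  obtain ⟨t, htP, ht1, ht0⟩ :=
    ((hev.filter_mono nhdsWithin_le_nhds).and
      ((h01.filter_mono nhdsWithin_le_nhds).and hpos)).exists
  set z := t • y + (1 - t) • xb with hzdef
  have hc := hconv y xb t ht0.le ht1.le
  rw [hm, hr, ← EReal.coe_mul, ← EReal.coe_mul, ← EReal.coe_add] at hc
  have hzt : φ z ≠ ⊤ := ne_top_of_le_ne_top (EReal.coe_ne_top _) hc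
  set s := (φ z).toReal with hsdef
  have hz : φ z = (s : EReal) := (EReal.coe_toReal hzt (hbot z)).symm
  rw [hz, EReal.coe_le_coe_iff] at hc
  have hzn : ‖z - xb‖ = t * ‖y - xb‖ := by
    have : z - xb = t • (y - xb) := by
      rw [hzdef]; rw [smul_sub]; rw [sub_smul, one_smul]; abel
    rw [this, norm_smul, Real.norm_eq_abs, abs_of_pos ht0]
  rw [hm, hz, hzn, ← EReal.coe_add, EReal.coe_le_coe_iff] at htP
  -- htP : m ≤ s + ℓ * (t * ‖y - xb‖), hc : s ≤ t * r + (1 - t) * m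
  have key : t * m ≤ t * (r + ℓ * ‖y - xb‖) := by nlinarith
  have := le_of_mul_le_mul_left (by linarith [key] : t * m ≤ t * (r + ℓ * ‖y - xb‖)) ht0
  linarith

/-- convex piecewise linear-quadratic functions are calm from below at
every point of their domain, and hence subdifferentiable there. -/
theorem stmt1 {n : ℕ} (φ : Euc n → EReal) (hbot : ∀ x, φ x ≠ ⊥)
    (hplq : IsPLQ φ) (hconv : ERealConvexOn φ) :
    ∀ xb : Euc n, φ xb ≠ ⊤ →
      (∃ ℓ : ℝ, 0 ≤ ℓ ∧ ∀ᶠ x in 𝓝 xb, φ xb ≤ φ x + ((ℓ * ‖x - xb‖ : ℝ) : EReal)) ∧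
      (limSubdiff φ xb).Nonempty := by
  intro xb hxb
  obtain ⟨ℓ, hℓ0, hcalm⟩ := plq_calm φ hplq xb hxb
  refine ⟨⟨ℓ, hℓ0, hcalm⟩, ?_⟩
  have hglob := calm_global φ hbot hconv xb hxb ℓ hcalm
  set m := (φ xb).toReal with hmdef
  have hm : φ xb = (m : EReal) := (EReal.coe_toReal hxb (hbot xb)).symm
  -- separation of epi φ from an open "calm" cone
  set D : Set (Euc n × ℝ) := {p | φ p.1 ≤ (p.2 : EReal)} with hDdef
  set K : Set (Euc n × ℝ) := {p | p.2 < m - ℓ * ‖p.1 - xb‖} with hKdef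
  have hmemD : ∀ p : Euc n × ℝ, p ∈ D → φ p.1 ≠ ⊤ ∧ (φ p.1).toReal ≤ p.2 := by
    intro p hp
    have h1 : φ p.1 ≠ ⊤ := ne_top_of_le_ne_top (EReal.coe_ne_top _) hp
    refine ⟨h1, ?_⟩
    have hp' : φ p.1 ≤ ((p.2 : ℝ) : EReal) := hp
    rw [(EReal.coe_toReal h1 (hbot p.1)).symm] at hp'
    exact EReal.coe_le_coe_iff.mp hp'
  have hDconv : Convex ℝ D := by
    intro p hp q hq a b ha hb hab
    obtain ⟨hp1, hp2⟩ := hmemD p hp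
    obtain ⟨hq1, hq2⟩ := hmemD q hq
    have hcp : φ p.1 = ((φ p.1).toReal : EReal) := (EReal.coe_toReal hp1 (hbot p.1)).symm
    have hcq : φ q.1 = ((φ q.1).toReal : EReal) := (EReal.coe_toReal hq1 (hbot q.1)).symm
    have hc := hconv p.1 q.1 a ha (by linarith)
    rw [show (1 - a : ℝ) = b by linarith] at hc
    rw [hcp, hcq, ← EReal.coe_mul, ← EReal.coe_mul, ← EReal.coe_add] at hc
    show φ (a • p + b • q).1 ≤ (((a • p + b • q).2 : ℝ) : EReal)
    have hfst : (a • p + b • q).1 = a • p.1 + b • q.1 := rfl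
    have hsnd : (a • p + b • q).2 = a * p.2 + b * q.2 := rfl
    rw [hfst, hsnd]
    refine hc.trans ?_
    rw [EReal.coe_le_coe_iff]
    have := mul_le_mul_of_nonneg_left hp2 ha
    have := mul_le_mul_of_nonneg_left hq2 hb
    linarith
  have hKconv : Convex ℝ K := by
    intro p hp q hq a b ha hb hab
    show (a • p + b • q).2 < m - ℓ * ‖(a • p + b • q).1 - xb‖
    have hfst : (a • p + b • q).1 = a • p.1 + b • q.1 := rfl
    have hsnd : (a • p + b • q).2 = a * p.2 + b * q.2 := rfl
    rw [hfst, hsnd]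
    have hxbeq : a • xb + b • xb = xb := by rw [← add_smul, hab, one_smul]
    have hdecomp : a • p.1 + b • q.1 - (a • xb + b • xb)
        = a • (p.1 - xb) + b • (q.1 - xb) := by
      rw [smul_sub, smul_sub]; abel
    rw [hxbeq] at hdecomp
    have hnorm : ‖a • p.1 + b • q.1 - xb‖ ≤ a * ‖p.1 - xb‖ + b * ‖q.1 - xb‖ := by
      rw [hdecomp]
      refine (norm_add_le _ _).trans ?_
      rw [norm_smul, norm_smul, Real.norm_eq_abs, Real.norm_eq_abs,
        abs_of_nonneg ha, abs_of_nonneg hb]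
    have hp' : p.2 < m - ℓ * ‖p.1 - xb‖ := hp
    have hq' : q.2 < m - ℓ * ‖q.1 - xb‖ := hq
    rcases eq_or_lt_of_le ha with haz | hapos
    · have hb1 : b = 1 := by linarith
      have heq : (a * p.2 + b * q.2 : ℝ) = q.2 := by rw [← haz, hb1]; ring
      have heq2 : a • p.1 + b • q.1 = q.1 := by
        rw [← haz, hb1, zero_smul, one_smul, zero_add]
      rw [heq, heq2]; exact hq'
    · have h1 : a * p.2 < a * (m - ℓ * ‖p.1 - xb‖) := mul_lt_mul_of_pos_left hp' hapos
      have h2 : b * q.2 ≤ b * (m - ℓ * ‖q.1 - xb‖) := mul_le_mul_of_nonneg_left hq'.le hb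
      have h3 : ℓ * ‖a • p.1 + b • q.1 - xb‖ ≤ ℓ * (a * ‖p.1 - xb‖ + b * ‖q.1 - xb‖) :=
        mul_le_mul_of_nonneg_left hnorm hℓ0
      have hm2 : a * m + b * m = m := by rw [← add_mul, hab, one_mul]
      nlinarith [h1, h2, h3, hm2]
  have hKopen : IsOpen K := by
    have : Continuous fun p : Euc n × ℝ => m - ℓ * ‖p.1 - xb‖ :=
      continuous_const.sub (continuous_const.mul
        ((continuous_fst.sub continuous_const).norm))
    exact isOpen_lt continuous_snd this
  have hdisj : Disjoint K D := by
    rw [Set.disjoint_left]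
    intro p hpK hpD
    obtain ⟨h1, h2⟩ := hmemD p hpD
    have h3 := hglob p.1 h1
    have h4 : p.2 < m - ℓ * ‖p.1 - xb‖ := hpK
    linarith
  obtain ⟨f, u, hK, hD⟩ := geometric_hahn_banach_open hKconv hKopen hDconv hdisj
  set c : ℝ := f (0, 1) with hcdef
  set g : Euc n → ℝ := fun x => f (x, 0) with hgdef
  have hsplit : ∀ (x : Euc n) (r : ℝ), f (x, r) = g x + r * c := by
    intro x r
    have : ((x, r) : Euc n × ℝ) = (x, 0) + r • ((0 : Euc n), (1 : ℝ)) := by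
      simp [Prod.ext_iff]
    rw [this, map_add, map_smul, smul_eq_mul]
  have hDpt : ∀ (y : Euc n), φ y ≠ ⊤ → u ≤ g y + (φ y).toReal * c := by
    intro y hy
    have : φ y ≤ (((φ y).toReal : ℝ) : EReal) := le_of_eq (EReal.coe_toReal hy (hbot y)).symm
    have := hD ((y, (φ y).toReal)) this
    rwa [hsplit] at this
  have hKpt : ∀ (x : Euc n) (ε : ℝ), 0 < ε → g x + (m - ℓ * ‖x - xb‖ - ε) * c < u := by
    intro x ε hε
    have hmem : ((x, m - ℓ * ‖x - xb‖ - ε) : Euc n × ℝ) ∈ K := by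
      show m - ℓ * ‖x - xb‖ - ε < m - ℓ * ‖x - xb‖
      linarith
    have := hK _ hmem
    rwa [hsplit] at this
  -- c ≥ 0
  have hc0 : 0 ≤ c := by
    by_contra hc
    push_neg at hc
    have hD2 : ∀ k : ℝ, 0 ≤ k → u ≤ g xb + (m + k) * c := by
      intro k hk
      have : φ xb ≤ (((m + k : ℝ)) : EReal) := by
        rw [hm]; exact_mod_cast EReal.coe_le_coe_iff.mpr (by linarith)
      have := hD ((xb, m + k)) this
      rwa [hsplit] at this
    set k : ℝ := max 0 ((u - g xb - m * c - 1) / c) with hkdef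
    have hk0 : 0 ≤ k := le_max_left _ _
    have hkc : k * c ≤ u - g xb - m * c - 1 := by
      have h := le_max_right 0 ((u - g xb - m * c - 1) / c)
      have h2 := mul_le_mul_of_nonpos_right h hc.le
      rw [div_mul_cancel₀ _ (ne_of_lt hc)] at h2
      linarith
    have hfin := hD2 k hk0
    have hexp : (m + k) * c = m * c + k * c := by ring
    linarith
  -- c ≠ 0
  have hcpos : 0 < c := by
    rcases hc0.lt_or_eq with h | h
    · exact h
    · exfalso
      have h1 := hDpt xb hxb
      have h2 := hKpt xb 1 one_pos
      rw [← h] at h1 h2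
      simp only [mul_zero, add_zero] at h1 h2
      linarith
  -- the subgradient vector
  set v : Euc n := (-c⁻¹) •
      ((InnerProductSpace.toDual ℝ (Euc n)).symm
        (f.comp (ContinuousLinearMap.inl ℝ (Euc n) ℝ))) with hvdef
  have hglin : ∀ x : Euc n, (inner ℝ v x : ℝ) = -c⁻¹ * g x := by
    intro x
    rw [hvdef, real_inner_smul_left, InnerProductSpace.toDual_symm_apply]
    rfl
  have hgsub : ∀ x y : Euc n, g (x - y) = g x - g y := by
    intro x y
    have : ((x - y, (0:ℝ)) : Euc n × ℝ) = (x, 0) - (y, 0) := by simp [Prod.ext_iff]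
    show f (x - y, 0) = f (x, 0) - f (y, 0)
    rw [this, map_sub]
  have hsub : ∀ y : Euc n, φ y ≠ ⊤ → m + (inner ℝ v (y - xb) : ℝ) ≤ (φ y).toReal := by
    intro y hy
    have h1 := hDpt y hy
    have key : g xb + m * c ≤ u := by
      by_contra hcon
      push_neg at hcon
      set ε : ℝ := (g xb + m * c - u) / c with hεdef
      have hεpos : 0 < ε := div_pos (by linarith) hcpos
      have h2 := hKpt xb ε hεpos
      rw [show xb - xb = 0 by abel, norm_zero, mul_zero, sub_zero] at h2
      have hεc : ε * c = g xb + m * c - u := div_mul_cancel₀ _ (ne_of_gt hcpos)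
      nlinarith
    have h3 : g xb + m * c ≤ g y + (φ y).toReal * c := key.trans h1
    rw [hglin, hgsub]
    have hinv : 0 < c⁻¹ := inv_pos.mpr hcpos
    have h4 : (m - (φ y).toReal) * c ≤ g y - g xb := by linarith
    have h5 := mul_le_mul_of_nonneg_right h4 hinv.le
    have h6 : (m - (φ y).toReal) * c * c⁻¹ = m - (φ y).toReal := by
      rw [mul_assoc, mul_inv_cancel₀ (ne_of_gt hcpos), mul_one]
    have h7 : (g y - g xb) * c⁻¹ = c⁻¹ * (g y - g xb) := mul_comm _ _
    linarith
  have hfre : v ∈ frechetSubdiff φ xb := by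
    intro ε hε
    refine Filter.Eventually.of_forall fun y => ?_
    by_cases hy : φ y = ⊤
    · rw [hy]; exact le_top
    · have h1 := hsub y hy
      rw [hm, ← EReal.coe_add, (EReal.coe_toReal hy (hbot y)).symm, EReal.coe_le_coe_iff]
      have h2 : 0 ≤ ε * ‖y - xb‖ := mul_nonneg hε.le (norm_nonneg _)
      linarith
  exact ⟨v, fun _ => xb, fun _ => v, tendsto_const_nhds, tendsto_const_nhds,
    tendsto_const_nhds, fun _ => hfre⟩
end
end

section
/- Let φ: ℝⁿ → ℝ ∪ {∞} be a convex piecewise linear-quadratic function with representation dom φ = ⋃_{i=1}^{s} Ω_i (Ω_i polyhedral convex). For any x̄ ∈ dom φ and any w ∈ dom dφ(x̄) (equivalently w ∈ T_{dom φ}(x̄)), the second-order tangent set satisfies T²_{dom φ}(x̄, w) = ⋃_{i ∈ J(x̄,w)} T²_{Ω_i}(x̄, w), where J(x̄,w) = {i : x̄ ∈ Ω_i and w ∈ T_{Ω_i}(x̄)}. -/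
open Filter Topology Metric Set

noncomputable section

/-- second-order tangent sets to domains of convex PWLQ functions. -/
theorem stmt2 {n : ℕ} (φ : Euc n → EReal) (hbot : ∀ x, φ x ≠ ⊥)
    (R : PLQRepr φ) (hconv : ERealConvexOn φ)
    (xb : Euc n) (hxb : φ xb ≠ ⊤) (w : Euc n)
    (hw : w ∈ tangentConeB (edom φ) xb) :
    secondTangent (edom φ) xb w =
      ⋃ i ∈ {i : Fin R.s | xb ∈ R.piece i ∧ w ∈ tangentConeB (R.piece i) xb},
        secondTangent (R.piece i) xb w := by
  ext u
  simp only [Set.mem_iUnion, Set.mem_setOf_eq, exists_prop]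
  constructor
  · rintro ⟨t, uk, ht, ht0, huk, hmem⟩
    have hmem' : ∀ k, ∃ i, xb + t k • w + ((t k) ^ 2 / 2) • uk k ∈ R.piece i := by
      intro k
      have h := hmem k
      rw [R.dom_eq] at h
      exact Set.mem_iUnion.mp h
    choose f hf using hmem'
    obtain ⟨i, hi⟩ := Finite.exists_infinite_fiber f
    have hinf : {k | f k = i}.Infinite := Set.infinite_coe_iff.mp hi
    set g : ℕ → ℕ := Nat.nth (fun k => f k = i) with hg
    have hgsm : StrictMono g := Nat.nth_strictMono hinf
    have hgi : ∀ k, f (g k) = i := fun k => Nat.nth_mem_of_infinite hinf k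
    have h1 : Tendsto (fun k => t (g k)) atTop (𝓝 0) := ht0.comp hgsm.tendsto_atTop
    have huk' : Tendsto (fun k => uk (g k)) atTop (𝓝 u) := huk.comp hgsm.tendsto_atTop
    set xk : ℕ → Euc n := fun k => xb + t (g k) • w + ((t (g k)) ^ 2 / 2) • uk (g k) with hxk
    have hxkmem : ∀ k, xk k ∈ R.piece i := by
      intro k
      have := hf (g k)
      rwa [hgi k] at this
    have hxkt : Tendsto xk atTop (𝓝 xb) := by
      have h2 : Tendsto xk atTop (𝓝 (xb + (0:ℝ) • w + ((0:ℝ) ^ 2 / 2) • u)) := by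
        exact (Tendsto.add tendsto_const_nhds (h1.smul_const w)).add
          (Tendsto.smul (((h1.pow 2).div_const 2)) huk')
      simpa using h2
    have hxbmem : xb ∈ R.piece i :=
      ((R.poly i).isClosed').mem_of_tendsto hxkt (Filter.Eventually.of_forall hxkmem)
    refine ⟨i, ⟨hxbmem, ?_⟩, ?_⟩
    · refine ⟨fun k => t (g k), fun k => w + (t (g k) / 2) • uk (g k),
        fun k => ht _, h1, ?_, ?_⟩
      · have h3 : Tendsto (fun k => w + (t (g k) / 2) • uk (g k)) atTop
            (𝓝 (w + ((0:ℝ) / 2) • u)) :=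
          Tendsto.add tendsto_const_nhds ((h1.div_const 2).smul huk')
        simpa using h3
      · intro k
        have hs : t (g k) * (t (g k) / 2) = (t (g k)) ^ 2 / 2 := by ring
        show xb + t (g k) • (w + (t (g k) / 2) • uk (g k)) ∈ R.piece i
        rw [smul_add, smul_smul, hs, ← add_assoc]
        exact hxkmem k
    · exact ⟨fun k => t (g k), fun k => uk (g k), fun k => ht _, h1, huk', hxkmem⟩
  · rintro ⟨i, ⟨_, _⟩, t, uk, ht, ht0, huk, hm⟩
    refine ⟨t, uk, ht, ht0, huk, fun k => ?_⟩
    rw [R.dom_eq]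
    exact Set.mem_iUnion.mpr ⟨i, hm k⟩
end
end

section
/- Let f: ℝⁿ → ℝᵐ be differentiable at x̄ and ϑ: ℝᵐ → ℝ ∪ {∞} be continuous relative to its domain with ϑ(f(x̄)) finite. If the epigraphical mapping H(x,α) = (f(x),α) − epi ϑ is metrically subregular at ((x̄, ϑ(f(x̄))), (0,0)), then the domain mapping G(x) = f(x) − dom ϑ is metrically subregular at (x̄, 0). -/
open Filter Topology Metric Set

noncomputable section

/-- metric subregularity of the epigraphical mapping implies metric
subregularity of the domain mapping. -/
theorem stmt3 {n m : ℕ} (f : Euc n → Euc m) (ϑ : Euc m → EReal) (xb : Euc n) (r : ℝ)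
    (hf : DifferentiableAt ℝ f xb) (hbot : ∀ y, ϑ y ≠ ⊥)
    (hfin : ϑ (f xb) = (r : EReal))
    (hcont : ContinuousOn ϑ (edom ϑ))
    (hH : ∃ κ : ℝ, 0 ≤ κ ∧ ∀ᶠ p : Euc n × ℝ in 𝓝 (xb, r),
      Metric.infDist p {q : Euc n × ℝ | (f q.1, q.2) ∈ epiSet ϑ} ≤
        κ * Metric.infDist (f p.1, p.2) (epiSet ϑ)) :
    ∃ κ : ℝ, MSQCAt f (edom ϑ) xb κ := by
  obtain ⟨κ, hκ0, hev⟩ := hH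
  refine ⟨κ, hκ0, ?_⟩
  have hfxb_dom : f xb ∈ edom ϑ := by simp [edom, hfin]
  set S : Set (Euc n × ℝ) := {q : Euc n × ℝ | (f q.1, q.2) ∈ epiSet ϑ} with hS
  have hSne : S.Nonempty := ⟨(xb, r), by simp [hS, epiSet, hfin]⟩
  rw [Metric.eventually_nhds_iff] at hev
  obtain ⟨ρ, hρ, hev⟩ := hev
  set η : ℝ := ρ / 2 with hηdef
  have hη : 0 < η := by positivity
  set s : ℝ := r + η with hsdef
  have hcw : ContinuousWithinAt ϑ (edom ϑ) (f xb) := hcont _ hfxb_dom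
  have hIio : Set.Iio ((s : ℝ) : EReal) ∈ 𝓝 (ϑ (f xb)) := by
    rw [hfin]
    exact Iio_mem_nhds (by exact_mod_cast (lt_add_of_pos_right r hη))
  have hpre : {y | ϑ y < ((s : ℝ) : EReal)} ∈ 𝓝[edom ϑ] (f xb) := hcw hIio
  rw [Metric.mem_nhdsWithin_iff] at hpre
  obtain ⟨δ, hδ, hpre⟩ := hpre
  obtain ⟨δ', hδ', hfc⟩ := Metric.continuousAt_iff.mp hf.continuousAt (δ / 3) (by positivity)
  rw [Metric.eventually_nhds_iff]
  refine ⟨min ρ δ', lt_min hρ hδ', fun x hx => ?_⟩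
  have hxρ : dist x xb < ρ := lt_of_lt_of_le hx (min_le_left _ _)
  have hxδ' : dist x xb < δ' := lt_of_lt_of_le hx (min_le_right _ _)
  have hfxδ : dist (f x) (f xb) < δ / 3 := hfc hxδ'
  set d : ℝ := Metric.infDist (f x) (edom ϑ) with hddef
  have hd3 : d < δ / 3 := lt_of_le_of_lt (Metric.infDist_le_dist_of_mem hfxb_dom) hfxδ
  apply le_of_forall_pos_le_add
  intro ε hε
  set ε' : ℝ := min (ε / (κ + 1)) (δ / 3) with hε'def
  have hε' : 0 < ε' := lt_min (by positivity) (by positivity)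
  obtain ⟨y, hy_dom, hy_dist⟩ :=
    (Metric.infDist_lt_iff ⟨f xb, hfxb_dom⟩).mp
      (show Metric.infDist (f x) (edom ϑ) < d + ε' by linarith [Metric.infDist_nonneg (x := f x) (s := edom ϑ)])
  have hyball : dist y (f xb) < δ := by
    have h1 : dist y (f xb) ≤ dist y (f x) + dist (f x) (f xb) := dist_triangle _ _ _
    have h2 : dist y (f x) = dist (f x) y := dist_comm _ _
    have h3 : ε' ≤ δ / 3 := min_le_right _ _
    linarith
  have hϑy : ϑ y < ((s : ℝ) : EReal) := hpre ⟨Metric.mem_ball.mpr hyball, hy_dom⟩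
  have hys : (y, s) ∈ epiSet ϑ := le_of_lt hϑy
  have hp_near : dist ((x, s) : Euc n × ℝ) (xb, r) < ρ := by
    rw [Prod.dist_eq]
    apply max_lt hxρ
    rw [Real.dist_eq]
    have : s - r = η := by rw [hsdef]; ring
    rw [this, abs_of_pos hη]
    rw [hηdef]; linarith
  have h1 : Metric.infDist ((x, s) : Euc n × ℝ) S ≤ κ * Metric.infDist (f x, s) (epiSet ϑ) :=
    hev hp_near
  have h2 : Metric.infDist ((f x, s) : Euc m × ℝ) (epiSet ϑ) ≤ dist (f x) y := by
    have := Metric.infDist_le_dist_of_mem (x := ((f x, s) : Euc m × ℝ)) hys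
    rwa [Prod.dist_eq, dist_self, max_eq_left dist_nonneg] at this
  have h3 : Metric.infDist x (f ⁻¹' edom ϑ) ≤ Metric.infDist ((x, s) : Euc n × ℝ) S := by
    by_contra hcon
    push_neg at hcon
    obtain ⟨q, hq, hqd⟩ := (Metric.infDist_lt_iff hSne).mp hcon
    have hq1 : q.1 ∈ f ⁻¹' edom ϑ := by
      have : ϑ (f q.1) ≤ ((q.2 : ℝ) : EReal) := hq
      exact ne_top_of_le_ne_top (EReal.coe_ne_top q.2) this
    have hA : Metric.infDist x (f ⁻¹' edom ϑ) ≤ dist x q.1 := Metric.infDist_le_dist_of_mem hq1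
    have hB : dist x q.1 ≤ dist ((x, s) : Euc n × ℝ) q := by
      rw [Prod.dist_eq]; exact le_max_left _ _
    linarith
  have hκε : κ * ε' ≤ ε := by
    have h4 : κ * ε' ≤ (κ + 1) * ε' := by nlinarith
    have h5 : (κ + 1) * ε' ≤ (κ + 1) * (ε / (κ + 1)) :=
      mul_le_mul_of_nonneg_left (min_le_left _ _) (by linarith)
    have h6 : (κ + 1) * (ε / (κ + 1)) = ε := mul_div_cancel₀ ε (by linarith)
    linarith
  calc Metric.infDist x (f ⁻¹' edom ϑ) ≤ κ * Metric.infDist (f x, s) (epiSet ϑ) := le_trans h3 h1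
    _ ≤ κ * dist (f x) y := mul_le_mul_of_nonneg_left h2 hκ0
    _ ≤ κ * (d + ε') := mul_le_mul_of_nonneg_left (le_of_lt hy_dist) hκ0
    _ = κ * d + κ * ε' := by ring
    _ ≤ κ * d + ε := by linarith
end
end

section
/- Let f: ℝⁿ → ℝᵐ be differentiable at x̄ and ϑ: ℝᵐ → ℝ ∪ {∞} be Lipschitz continuous around f(x̄) relative to its domain with ϑ(f(x̄)) finite. If the mapping x ↦ f(x) − dom ϑ is metrically subregular at (x̄, 0), then the subderivative chain rule holds as an equality: d(ϑ∘f)(x̄)(w) = dϑ(f(x̄))(∇f(x̄)w) for all w ∈ ℝⁿ. -/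
open Filter Topology Metric Set

noncomputable section

section Helpers
open Asymptotics

lemma liminf_le_liminf_tendsto {α β : Type*} {F : Filter α} {G : Filter β} {g : β → α}
    (h : Tendsto g G F) (u : α → EReal) : liminf u F ≤ liminf (u ∘ g) G := by
  rw [Filter.liminf_comp]
  exact liminf_le_liminf_of_le h

lemma tendsto_quot {E F : Type*} [NormedAddCommGroup E] [NormedSpace ℝ E]
    [NormedAddCommGroup F] [NormedSpace ℝ F] {f : E → F} {xb : E}
    (hf : DifferentiableAt ℝ f xb) (w : E) :
    Tendsto (fun p : ℝ × E => (p.1⁻¹ : ℝ) • (f (xb + p.1 • p.2) - f xb))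
      ((𝓝[>] (0:ℝ)) ×ˢ 𝓝 w) (𝓝 (fderiv ℝ f xb w)) := by
  set A := fderiv ℝ f xb with hA
  have hr : (fun h => f (xb + h) - f xb - A h) =o[𝓝 0] id :=
    hasFDerivAt_iff_isLittleO_nhds_zero.1 hf.hasFDerivAt
  have htf : Tendsto (fun p : ℝ × E => p.1) ((𝓝[>] (0:ℝ)) ×ˢ 𝓝 w) (𝓝 0) :=
    (tendsto_fst (f := 𝓝[>] (0:ℝ)) (g := 𝓝 w)).mono_right nhdsWithin_le_nhds
  have hts : Tendsto (fun p : ℝ × E => p.2) ((𝓝[>] (0:ℝ)) ×ˢ 𝓝 w) (𝓝 w) :=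
    tendsto_snd (f := 𝓝[>] (0:ℝ)) (g := 𝓝 w)
  have hpos : ∀ᶠ p : ℝ × E in (𝓝[>] (0:ℝ)) ×ˢ 𝓝 w, 0 < p.1 :=
    (tendsto_fst (f := 𝓝[>] (0:ℝ)) (g := 𝓝 w)).eventually eventually_mem_nhdsWithin
  have hmain : Tendsto (fun p : ℝ × E => A p.2 + (p.1⁻¹ : ℝ) • (f (xb + p.1 • p.2) - f xb - A (p.1 • p.2)))
      ((𝓝[>] (0:ℝ)) ×ˢ 𝓝 w) (𝓝 (A w)) := by
    have h1 : Tendsto (fun p : ℝ × E => A p.2) ((𝓝[>] (0:ℝ)) ×ˢ 𝓝 w) (𝓝 (A w)) :=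
      (A.continuous.tendsto w).comp hts
    have h2 : Tendsto (fun p : ℝ × E => (p.1⁻¹ : ℝ) • (f (xb + p.1 • p.2) - f xb - A (p.1 • p.2)))
        ((𝓝[>] (0:ℝ)) ×ˢ 𝓝 w) (𝓝 0) := by
      rw [NormedAddCommGroup.tendsto_nhds_zero]
      intro ε hε
      have hc : (0:ℝ) < ε / (2 * (‖w‖ + 1)) := by positivity
      have hsm : Tendsto (fun p : ℝ × E => p.1 • p.2) ((𝓝[>] (0:ℝ)) ×ˢ 𝓝 w) (𝓝 0) := by
        have := htf.smul hts
        simpa using this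
      have hro := hsm.eventually (hr.def hc)
      have hnw : ∀ᶠ p : ℝ × E in (𝓝[>] (0:ℝ)) ×ˢ 𝓝 w, ‖p.2‖ < ‖w‖ + 1 := by
        have h6 : ∀ᶠ v : E in 𝓝 w, ‖v‖ < ‖w‖ + 1 :=
          (continuous_norm.tendsto w).eventually_lt_const (by linarith [norm_nonneg w])
        exact hts.eventually h6
      filter_upwards [hro, hnw, hpos] with p hrp hwp hp
      have hid : ‖id (p.1 • p.2)‖ = p.1 * ‖p.2‖ := by
        rw [id_eq, norm_smul, Real.norm_eq_abs, abs_of_pos hp]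
      rw [norm_smul]
      have h3 : ‖f (xb + p.1 • p.2) - f xb - A (p.1 • p.2)‖ ≤ ε / (2 * (‖w‖ + 1)) * (p.1 * ‖p.2‖) := by
        calc ‖f (xb + p.1 • p.2) - f xb - A (p.1 • p.2)‖
            ≤ ε / (2 * (‖w‖ + 1)) * ‖id (p.1 • p.2)‖ := hrp
          _ = ε / (2 * (‖w‖ + 1)) * (p.1 * ‖p.2‖) := by rw [hid]
      have h4 : ‖(p.1⁻¹:ℝ)‖ = p.1⁻¹ := by
        rw [Real.norm_eq_abs, abs_of_pos (inv_pos.2 hp)]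
      rw [h4]
      have h5 : p.1⁻¹ * (ε / (2 * (‖w‖ + 1)) * (p.1 * ‖p.2‖)) = ε / (2 * (‖w‖ + 1)) * ‖p.2‖ := by
        field_simp
      calc p.1⁻¹ * ‖f (xb + p.1 • p.2) - f xb - A (p.1 • p.2)‖
          ≤ p.1⁻¹ * (ε / (2 * (‖w‖ + 1)) * (p.1 * ‖p.2‖)) :=
            mul_le_mul_of_nonneg_left h3 (le_of_lt (inv_pos.2 hp))
        _ = ε / (2 * (‖w‖ + 1)) * ‖p.2‖ := h5
        _ < ε := by
            rw [div_mul_eq_mul_div, div_lt_iff₀ (by positivity)]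
            nlinarith [norm_nonneg p.2]
    have := h1.add h2
    simpa using this
  apply hmain.congr'
  filter_upwards [hpos] with p hp
  have hp0 : (p.1:ℝ) ≠ 0 := ne_of_gt hp
  have hAs : (p.1⁻¹ : ℝ) • A (p.1 • p.2) = A p.2 := by
    rw [← map_smul, inv_smul_smul₀ hp0]
  rw [smul_sub, smul_sub, hAs]
  abel

end Helpers

set_option maxHeartbeats 1000000 in
/-- subderivative chain rule as an equality under metric subregularity. -/
theorem stmt4 {n m : ℕ} (f : Euc n → Euc m) (ϑ : Euc m → EReal) (xb : Euc n)
    (hf : DifferentiableAt ℝ f xb) (hbot : ∀ y, ϑ y ≠ ⊥) (hfin : ϑ (f xb) ≠ ⊤)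
    (ℓ : ℝ) (hl : 0 ≤ ℓ) (hlip : LipRelDom ϑ (f xb) ℓ)
    (κ : ℝ) (hmsqc : MSQCAt f (edom ϑ) xb κ) :
    ∀ w : Euc n,
      subderiv (fun x => ϑ (f x)) xb w = subderiv ϑ (f xb) (fderiv ℝ f xb w) := by
  intro w
  set yb := f xb with hyb
  set A := fderiv ℝ f xb with hA
  set Lw : Filter (ℝ × Euc n) := (𝓝[>] (0:ℝ)) ×ˢ 𝓝 w with hLw
  set LA : Filter (ℝ × Euc m) := (𝓝[>] (0:ℝ)) ×ˢ 𝓝 (A w) with hLA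
  set Qψ : ℝ × Euc n → EReal := fun p => ((p.1⁻¹ : ℝ) : EReal) * (ϑ (f (xb + p.1 • p.2)) - ϑ yb) with hQψ
  set Qϑ : ℝ × Euc m → EReal := fun p => ((p.1⁻¹ : ℝ) : EReal) * (ϑ (yb + p.1 • p.2) - ϑ yb) with hQϑ
  have hpos : ∀ᶠ p : ℝ × Euc n in Lw, 0 < p.1 :=
    (tendsto_fst (f := 𝓝[>] (0:ℝ)) (g := 𝓝 w)).eventually eventually_mem_nhdsWithin
  have hsub1 : subderiv (fun x => ϑ (f x)) xb w = liminf Qψ Lw := rfl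
  have hsub2 : subderiv ϑ yb (A w) = liminf Qϑ LA := rfl
  have hge : liminf Qϑ LA ≤ liminf Qψ Lw := by
    have hg : Tendsto (fun p : ℝ × Euc n => (p.1, (p.1⁻¹ : ℝ) • (f (xb + p.1 • p.2) - yb))) Lw LA :=
      Tendsto.prodMk (tendsto_fst (f := 𝓝[>] (0:ℝ)) (g := 𝓝 w)) (tendsto_quot hf w)
    refine le_trans (liminf_le_liminf_tendsto hg Qϑ) (le_of_eq ?_)
    apply liminf_congr
    filter_upwards [hpos] with p hp
    have hp0 : (p.1 : ℝ) ≠ 0 := ne_of_gt hp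
    show ((p.1⁻¹:ℝ):EReal) * (ϑ (yb + p.1 • (p.1⁻¹ • (f (xb + p.1 • p.2) - yb))) - ϑ yb) = Qψ p
    rw [smul_inv_smul₀ hp0, add_sub_cancel]
  refine le_antisymm ?_ hge
  show liminf Qψ Lw ≤ liminf Qϑ LA
  rw [← EReal.le_of_forall_lt_iff_le]
  intro zr hzr
  obtain ⟨c, hc1, hc2⟩ := EReal.exists_between_coe_real hzr
  have hczr : c < zr := EReal.coe_lt_coe_iff.1 hc2
  have hfreq : ∃ᶠ p in LA, Qϑ p < (c : EReal) := frequently_lt_of_liminf_lt (by isBoundedDefault) hc1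
  have hposA : ∀ᶠ p : ℝ × Euc m in LA, 0 < p.1 :=
    (tendsto_fst (f := 𝓝[>] (0:ℝ)) (g := 𝓝 (A w))).eventually eventually_mem_nhdsWithin
  obtain ⟨pk, hpk, hPk⟩ := exists_seq_forall_of_frequently (hfreq.and_eventually hposA)
  set t : ℕ → ℝ := fun k => (pk k).1 with ht_def
  set z : ℕ → Euc m := fun k => (pk k).2 with hz_def
  have htk : ∀ k, 0 < t k := fun k => (hPk k).2
  have ht : Tendsto t atTop (𝓝[>] 0) := tendsto_fst.comp hpk
  have ht0 : Tendsto t atTop (𝓝 0) := ht.mono_right nhdsWithin_le_nhds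
  have hz : Tendsto z atTop (𝓝 (A w)) := tendsto_snd.comp hpk
  set y : ℕ → Euc m := fun k => yb + t k • z k with hy_def
  have hQk : ∀ k, (((t k)⁻¹ : ℝ) : EReal) * (ϑ (y k) - ϑ yb) < (c : EReal) := fun k => (hPk k).1
  set β : ℝ := (ϑ yb).toReal with hβ_def
  have hβ : ((β : ℝ) : EReal) = ϑ yb := EReal.coe_toReal hfin (hbot yb)
  have hydom : ∀ k, ϑ (y k) ≠ ⊤ := by
    intro k hT
    have h7 := hQk k
    rw [hT, ← hβ, EReal.top_sub_coe, EReal.coe_mul_top_of_pos (inv_pos.2 (htk k))] at h7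
    exact not_top_lt h7
  set γ : ℕ → ℝ := fun k => (ϑ (y k)).toReal with hγ_def
  have hγ : ∀ k, ((γ k : ℝ) : EReal) = ϑ (y k) := fun k => EReal.coe_toReal (hydom k) (hbot _)
  have hq : ∀ k, (t k)⁻¹ * (γ k - β) < c := by
    intro k
    have h7 := hQk k
    rw [← hγ k, ← hβ, ← EReal.coe_sub, ← EReal.coe_mul] at h7
    exact EReal.coe_lt_coe_iff.1 h7
  set r : Euc n → Euc m := fun h => f (xb + h) - yb - A h with hr_def
  have hr : r =o[𝓝 0] id := hasFDerivAt_iff_isLittleO_nhds_zero.1 hf.hasFDerivAt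
  set a : ℕ → ℝ := fun k => ‖A w - z k‖ + ‖r (t k • w)‖ / t k with ha_def
  have htw : Tendsto (fun k => t k • w) atTop (𝓝 0) := by
    have := ht0.smul_const w
    simpa using this
  have ha1 : Tendsto (fun k => ‖A w - z k‖) atTop (𝓝 0) := by
    have h30 : Tendsto (fun k => A w - z k) atTop (𝓝 (A w - A w)) := tendsto_const_nhds.sub hz
    rw [sub_self] at h30
    have := h30.norm
    simpa using this
  have hrw : Tendsto (fun k => ‖r (t k • w)‖ / t k) atTop (𝓝 0) := by
    have h2 : (fun k => r (t k • w)) =o[atTop] fun k => t k • w := hr.comp_tendsto htw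
    have h3 : (fun k => t k • w) =O[atTop] fun k => t k := by
      apply Asymptotics.IsBigO.of_bound ‖w‖
      filter_upwards with k
      rw [norm_smul]
      exact le_of_eq (mul_comm _ _)
    exact ((h2.trans_isBigO h3).norm_left).tendsto_div_nhds_zero
  have ha : Tendsto a atTop (𝓝 0) := by
    have := ha1.add hrw
    simpa using this
  set S : Set (Euc n) := f ⁻¹' (edom ϑ) with hS_def
  have hS : xb ∈ S := hfin
  set x : ℕ → Euc n := fun k => xb + t k • w with hx_def
  have hx : Tendsto x atTop (𝓝 xb) := by
    have h31 : Tendsto (fun k => xb + t k • w) atTop (𝓝 (xb + 0)) :=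
      tendsto_const_nhds.add htw
    rw [add_zero] at h31
    exact h31
  have hfxy : ∀ k, f (x k) - y k = t k • (A w - z k) + r (t k • w) := by
    intro k
    simp only [hx_def, hy_def, hr_def, map_smul, smul_sub]
    abel
  have hnormb : ∀ k, ‖f (x k) - y k‖ ≤ t k * a k := by
    intro k
    rw [hfxy k]
    have h8 : t k * a k = t k * ‖A w - z k‖ + ‖r (t k • w)‖ := by
      show t k * (‖A w - z k‖ + ‖r (t k • w)‖ / t k) = _
      rw [mul_add, ← mul_div_assoc, mul_div_cancel_left₀ _ (htk k).ne']
    calc ‖t k • (A w - z k) + r (t k • w)‖ ≤ ‖t k • (A w - z k)‖ + ‖r (t k • w)‖ := norm_add_le _ _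
      _ = t k * ‖A w - z k‖ + ‖r (t k • w)‖ := by
          rw [norm_smul, Real.norm_eq_abs, abs_of_pos (htk k)]
      _ = t k * a k := h8.symm
  have hinf : ∀ᶠ k in atTop, infDist (x k) S ≤ κ * (t k * a k) := by
    filter_upwards [hx.eventually hmsqc.2] with k hk
    refine hk.trans (mul_le_mul_of_nonneg_left ?_ hmsqc.1)
    calc infDist (f (x k)) (edom ϑ) ≤ dist (f (x k)) (y k) := infDist_le_dist_of_mem (hydom k)
      _ = ‖f (x k) - y k‖ := dist_eq_norm _ _
      _ ≤ t k * a k := hnormb k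
  have hex : ∀ k, ∃ v, v ∈ S ∧ (infDist (x k) S < κ * (t k * a k) + t k / ((k:ℝ)+1) →
      dist (x k) v < κ * (t k * a k) + t k / ((k:ℝ)+1)) := by
    intro k
    by_cases hcase : infDist (x k) S < κ * (t k * a k) + t k / ((k:ℝ)+1)
    · obtain ⟨v, hv1, hv2⟩ := (Metric.infDist_lt_iff ⟨xb, hS⟩).1 hcase
      exact ⟨v, hv1, fun _ => hv2⟩
    · exact ⟨xb, hS, fun h => absurd h hcase⟩
  choose x' hx'S hx'd using hex
  have hdist : ∀ᶠ k in atTop, dist (x k) (x' k) < κ * (t k * a k) + t k / ((k:ℝ)+1) := by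
    filter_upwards [hinf] with k hk
    refine hx'd k (lt_of_le_of_lt hk (lt_add_of_pos_right _ (div_pos (htk k) ?_)))
    positivity
  set u : ℕ → Euc n := fun k => (t k)⁻¹ • (x' k - xb) with hu_def
  have hxu : ∀ k, xb + t k • u k = x' k := by
    intro k
    rw [hu_def]
    simp only [smul_inv_smul₀ (htk k).ne']
    abel
  have hx'xk : ∀ k, x' k - x k = (x' k - xb) - t k • w := by
    intro k; rw [hx_def]; exact sub_add_eq_sub_sub _ _ _
  have hub : ∀ᶠ k in atTop, ‖u k - w‖ ≤ κ * a k + 1 / ((k:ℝ)+1) := by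
    filter_upwards [hdist] with k hk
    have h9 : u k - w = (t k)⁻¹ • (x' k - x k) := by
      rw [hu_def, hx'xk k, smul_sub, inv_smul_smul₀ (htk k).ne']
    rw [h9, norm_smul, Real.norm_eq_abs, abs_of_pos (inv_pos.2 (htk k))]
    have h10 : ‖x' k - x k‖ ≤ κ * (t k * a k) + t k / ((k:ℝ)+1) := by
      rw [← dist_eq_norm']
      exact hk.le
    have h11 : (t k)⁻¹ * (κ * (t k * a k) + t k / ((k:ℝ)+1)) = κ * a k + 1 / ((k:ℝ)+1) := by
      have hk1 : ((k:ℝ)+1) ≠ 0 := by positivity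
      field_simp [(htk k).ne']
    rw [← h11]
    exact mul_le_mul_of_nonneg_left h10 (inv_pos.2 (htk k)).le
  have hlim2 : Tendsto (fun k => κ * a k + 1 / ((k:ℝ)+1)) atTop (𝓝 0) := by
    have := (ha.const_mul κ).add tendsto_one_div_add_atTop_nhds_zero_nat
    simpa using this
  have hu : Tendsto u atTop (𝓝 w) := by
    rw [tendsto_iff_norm_sub_tendsto_zero]
    exact squeeze_zero' (Eventually.of_forall fun k => norm_nonneg _) hub hlim2
  have hseq : Tendsto (fun k => (t k, u k)) atTop Lw := Tendsto.prodMk ht hu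
  have hx' : Tendsto x' atTop (𝓝 xb) := by
    have h12 : Tendsto (fun k => xb + t k • u k) atTop (𝓝 xb) := by
      have h32 : Tendsto (fun k => t k • u k) atTop (𝓝 ((0:ℝ) • w)) := ht0.smul hu
      rw [zero_smul] at h32
      have h33 : Tendsto (fun k => xb + t k • u k) atTop (𝓝 (xb + 0)) :=
        tendsto_const_nhds.add h32
      rw [add_zero] at h33
      exact h33
    exact h12.congr hxu
  have hfx' : Tendsto (fun k => f (x' k)) atTop (𝓝 yb) := hf.continuousAt.tendsto.comp hx'
  have hyt : Tendsto y atTop (𝓝 yb) := by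
    have h32 : Tendsto (fun k => t k • z k) atTop (𝓝 ((0:ℝ) • A w)) := ht0.smul hz
    rw [zero_smul] at h32
    have h33 : Tendsto (fun k => yb + t k • z k) atTop (𝓝 (yb + 0)) :=
      tendsto_const_nhds.add h32
    rw [add_zero] at h33
    exact h33.congr (fun k => (congrFun hy_def k).symm)
  set b : ℕ → ℝ := fun k => ‖f (x' k) - y k‖ / t k with hb_def
  clear_value t z y a r S x u b β γ
  have hbval : ∀ k, f (x' k) - y k = A (x' k - x k) + t k • (A w - z k) + r (x' k - xb) := by
    intro k
    have hxx : xb + (x' k - xb) = x' k := by abel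
    have harg : f (x' k) = r (x' k - xb) + yb + A (x' k - xb) := by
      simp only [hr_def, hxx]
      abel
    rw [harg]
    simp only [hy_def, hx'xk k, map_sub, map_smul, smul_sub]
    abel
  have hre : Tendsto (fun k => ‖r (x' k - xb)‖ / t k) atTop (𝓝 0) := by
    have he0 : Tendsto (fun k => x' k - xb) atTop (𝓝 0) := by
      have := hx'.sub_const xb
      simpa using this
    have hoe : (fun k => r (x' k - xb)) =o[atTop] fun k => x' k - xb := hr.comp_tendsto he0
    have heO : (fun k => x' k - xb) =O[atTop] t := by
      apply Asymptotics.IsBigO.of_bound (κ + 1 + ‖w‖)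
      filter_upwards [hdist, ha.eventually_lt_const one_pos] with k hk hak
      have h13 : ‖x' k - xb‖ ≤ ‖x' k - x k‖ + ‖t k • w‖ := by
        have : x' k - xb = (x' k - x k) + t k • w := by rw [hx'xk k]; abel
        rw [this]
        exact norm_add_le _ _
      have h14 : ‖x' k - x k‖ < κ * (t k * a k) + t k / ((k:ℝ)+1) := by
        rw [← dist_eq_norm']
        exact hk
      have h15 : ‖t k • w‖ = t k * ‖w‖ := by
        rw [norm_smul, Real.norm_eq_abs, abs_of_pos (htk k)]
      have h16 : κ * (t k * a k) ≤ κ * t k := by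
        have := mul_le_mul_of_nonneg_left (mul_le_of_le_one_right (htk k).le hak.le) hmsqc.1
        linarith [this]
      have h17 : t k / ((k:ℝ)+1) ≤ t k := by
        rw [div_le_iff₀ (by positivity : (0:ℝ) < (k:ℝ)+1)]
        nlinarith [htk k, Nat.cast_nonneg (α := ℝ) k]
      have h18 : ‖t k‖ = t k := by rw [Real.norm_eq_abs, abs_of_pos (htk k)]
      have h23 : (κ + 1 + ‖w‖) * t k = κ * t k + t k + t k * ‖w‖ := by ring
      rw [h18, h23]
      calc ‖x' k - xb‖ ≤ ‖x' k - x k‖ + ‖t k • w‖ := h13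
        _ ≤ (κ * (t k * a k) + t k / ((k:ℝ)+1)) + t k * ‖w‖ := by
            rw [h15]; exact add_le_add h14.le le_rfl
        _ ≤ κ * t k + t k + t k * ‖w‖ := add_le_add (add_le_add h16 h17) le_rfl
    exact ((hoe.trans_isBigO heO).norm_left).tendsto_div_nhds_zero
  have hA0 : (0:ℝ) ≤ ‖A‖ := norm_nonneg _
  have hbub : ∀ᶠ k in atTop, b k ≤ ‖A‖ * (κ * a k + 1 / ((k:ℝ)+1)) + ‖A w - z k‖ + ‖r (x' k - xb)‖ / t k := by
    filter_upwards [hdist] with k hk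
    have h19 : ‖f (x' k) - y k‖ ≤ ‖A‖ * (κ * (t k * a k) + t k / ((k:ℝ)+1)) + t k * ‖A w - z k‖ + ‖r (x' k - xb)‖ := by
      rw [hbval k]
      have h20 : ‖A (x' k - x k)‖ ≤ ‖A‖ * (κ * (t k * a k) + t k / ((k:ℝ)+1)) := by
        refine (A.le_opNorm _).trans (mul_le_mul_of_nonneg_left ?_ hA0)
        rw [← dist_eq_norm']
        exact hk.le
      have h21 : ‖t k • (A w - z k)‖ = t k * ‖A w - z k‖ := by
        rw [norm_smul, Real.norm_eq_abs, abs_of_pos (htk k)]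
      calc ‖A (x' k - x k) + t k • (A w - z k) + r (x' k - xb)‖
          ≤ ‖A (x' k - x k) + t k • (A w - z k)‖ + ‖r (x' k - xb)‖ := norm_add_le _ _
        _ ≤ ‖A (x' k - x k)‖ + ‖t k • (A w - z k)‖ + ‖r (x' k - xb)‖ := by
            have := norm_add_le (A (x' k - x k)) (t k • (A w - z k))
            linarith
        _ ≤ ‖A‖ * (κ * (t k * a k) + t k / ((k:ℝ)+1)) + t k * ‖A w - z k‖ + ‖r (x' k - xb)‖ := by
            rw [h21]
            linarith
    simp only [hb_def]
    have hk1 : ((k:ℝ)+1) ≠ 0 := by positivity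
    have h22 : (‖A‖ * (κ * (t k * a k) + t k / ((k:ℝ)+1)) + t k * ‖A w - z k‖ + ‖r (x' k - xb)‖) / t k
        = ‖A‖ * (κ * a k + 1 / ((k:ℝ)+1)) + ‖A w - z k‖ + ‖r (x' k - xb)‖ / t k := by
      field_simp [(htk k).ne']
    rw [← h22]
    exact div_le_div_of_nonneg_right h19 (htk k).le
  have hb : Tendsto b atTop (𝓝 0) := by
    have hlim3 : Tendsto (fun k => ‖A‖ * (κ * a k + 1 / ((k:ℝ)+1)) + ‖A w - z k‖ + ‖r (x' k - xb)‖ / t k) atTop (𝓝 0) := by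
      have := ((hlim2.const_mul ‖A‖).add ha1).add hre
      simpa using this
    refine squeeze_zero' (Eventually.of_forall fun k => ?_) hbub hlim3
    simp only [hb_def]
    exact div_nonneg (norm_nonneg _) (htk k).le
  obtain ⟨V, hV, hVp⟩ := hlip
  have hql : ∀ᶠ k in atTop, Qψ (t k, u k) ≤ (((c + ℓ * b k : ℝ)) : EReal) := by
    filter_upwards [hfx'.eventually_mem hV, hyt.eventually_mem hV] with k h1 h2
    have hαt : ϑ (f (x' k)) ≠ ⊤ := by
      have h50 := hx'S k
      rw [hS_def] at h50
      exact h50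
    have hα : (((ϑ (f (x' k))).toReal : ℝ) : EReal) = ϑ (f (x' k)) :=
      EReal.coe_toReal hαt (hbot _)
    have hlipk := hVp _ h1 _ h2 hαt (hydom k)
    rw [← hα, ← hγ k, ← EReal.coe_add] at hlipk
    have hreal : (ϑ (f (x' k))).toReal ≤ γ k + ℓ * ‖f (x' k) - y k‖ :=
      EReal.coe_le_coe_iff.1 hlipk
    have hfb : ‖f (x' k) - y k‖ = t k * b k := by
      simp only [hb_def]
      rw [← mul_div_assoc, mul_div_cancel_left₀ _ (htk k).ne']
    have hq2 : (t k)⁻¹ * ((ϑ (f (x' k))).toReal - β) ≤ c + ℓ * b k := by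
      have h40 := hq k
      have h42 : (ϑ (f (x' k))).toReal - β ≤ (γ k - β) + ℓ * (t k * b k) := by
        rw [← hfb]; linarith
      have h43 : (t k)⁻¹ * ((ϑ (f (x' k))).toReal - β) ≤ (t k)⁻¹ * ((γ k - β) + ℓ * (t k * b k)) :=
        mul_le_mul_of_nonneg_left h42 (inv_pos.2 (htk k)).le
      have h44 : (t k)⁻¹ * ((γ k - β) + ℓ * (t k * b k)) = (t k)⁻¹ * (γ k - β) + ℓ * b k := by
        field_simp [(htk k).ne']
      rw [h44] at h43
      linarith
    show (((t k)⁻¹ : ℝ) : EReal) * (ϑ (f (xb + t k • u k)) - ϑ yb) ≤ (((c + ℓ * b k : ℝ)) : EReal)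
    rw [hxu k, ← hα, ← hβ, ← EReal.coe_sub, ← EReal.coe_mul]
    exact EReal.coe_le_coe_iff.2 hq2
  have hlb : Tendsto (fun k => ℓ * b k) atTop (𝓝 0) := by
    have := hb.const_mul ℓ
    simpa using this
  calc liminf Qψ Lw ≤ liminf (Qψ ∘ fun k => (t k, u k)) atTop := liminf_le_liminf_tendsto hseq Qψ
    _ ≤ (zr : EReal) := by
      apply liminf_le_of_frequently_le'
      refine Eventually.frequently ?_
      filter_upwards [hql, hlb.eventually_lt_const (by linarith : (0:ℝ) < zr - c)] with k h1 h2
      refine h1.trans ?_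
      exact EReal.coe_le_coe_iff.2 (by linarith)
end
end

section
/- Let φ: ℝⁿ → ℝ ∪ {∞}, x̄ ∈ dom φ, and v̄ ∈ ∂_p φ(x̄) be a proximal subgradient. Assume that for every w ∈ ℝⁿ with dφ(x̄)(w) = ⟨v̄, w⟩, the second-order tangent set T²_{epi φ}((x̄, φ(x̄)), (w, dφ(x̄)(w))) is nonempty. Then dom d²φ(x̄, v̄) = {w ∈ ℝⁿ : dφ(x̄)(w) = ⟨v̄, w⟩}. -/
open Filter Topology Metric Set

noncomputable section

section Stmt7Aux

open Filter Topology

private lemma stmt7_lower {n : ℕ} (φ : Euc n → EReal) (xb vb : Euc n) (c : ℝ)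
    (hbot : ∀ x, φ x ≠ ⊥) (hxb : φ xb = (c : EReal))
    (hprox : vb ∈ proxSubdiff φ xb) (w : Euc n) :
    ((inner ℝ vb w : ℝ) : EReal) ≤ subderiv φ xb w := by
  obtain ⟨r, hr, γ, hγ, hpx⟩ := hprox
  have hδ : 0 < γ / (‖w‖ + 2) := by positivity
  have hev : ∀ᶠ p : ℝ × Euc n in (𝓝[>] (0:ℝ)) ×ˢ 𝓝 w,
      (((inner ℝ vb p.2 : ℝ) - r / 2 * p.1 * ‖p.2‖ ^ 2 : ℝ) : EReal) ≤
        ((p.1⁻¹ : ℝ) : EReal) * (φ (xb + p.1 • p.2) - φ xb) := by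
    have h1 : Set.Ioo (0:ℝ) (γ / (‖w‖ + 2)) ∈ 𝓝[>] (0:ℝ) :=
      Ioo_mem_nhdsGT_of_mem ⟨le_refl _, hδ⟩
    have h2 : Metric.ball w 1 ∈ 𝓝 w := Metric.ball_mem_nhds w one_pos
    filter_upwards [Filter.prod_mem_prod h1 h2] with p hp
    obtain ⟨⟨ht0, htδ⟩, hu⟩ := hp
    have hun : ‖p.2‖ < ‖w‖ + 1 := by
      have h3 := norm_sub_norm_le p.2 w
      have hd : ‖p.2 - w‖ < 1 := by simpa [Metric.mem_ball, dist_eq_norm] using hu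
      linarith
    have hyball : xb + p.1 • p.2 ∈ Metric.ball xb γ := by
      rw [Metric.mem_ball, dist_eq_norm, add_sub_cancel_left, norm_smul,
        Real.norm_eq_abs, abs_of_pos ht0]
      have h3 : p.1 * ‖p.2‖ < (γ / (‖w‖ + 2)) * (‖w‖ + 1) := by
        nlinarith [norm_nonneg p.2]
      have h4 : (γ / (‖w‖ + 2)) * (‖w‖ + 1) < γ := by
        rw [div_mul_eq_mul_div, div_lt_iff₀ (by positivity)]
        nlinarith
      linarith
    have hkey := hpx _ hyball
    rw [hxb, add_sub_cancel_left] at hkey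
    have hiv : (inner ℝ vb (p.1 • p.2) : ℝ) = p.1 * (inner ℝ vb p.2 : ℝ) :=
      real_inner_smul_right vb p.2 p.1
    have hnrm : ‖p.1 • p.2‖ = p.1 * ‖p.2‖ := by
      rw [norm_smul, Real.norm_eq_abs, abs_of_pos ht0]
    rw [hiv, hnrm, ← EReal.coe_add] at hkey
    rcases eq_or_ne (φ (xb + p.1 • p.2)) ⊤ with htop | hne
    · rw [htop, hxb, EReal.top_sub_coe,
        EReal.mul_top_of_pos (by exact_mod_cast inv_pos.mpr ht0 : (0:EReal) < ((p.1⁻¹ : ℝ) : EReal))]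
      exact le_top
    · have hne' := hbot (xb + p.1 • p.2)
      rw [← EReal.coe_toReal hne hne'] at hkey ⊢
      rw [hxb, ← EReal.coe_sub, ← EReal.coe_mul, EReal.coe_le_coe_iff]
      have hkeyR : c + (p.1 * (inner ℝ vb p.2 : ℝ) - r / 2 * (p.1 * ‖p.2‖) ^ 2) ≤
          (φ (xb + p.1 • p.2)).toReal := EReal.coe_le_coe_iff.mp hkey
      rw [inv_mul_eq_div, le_div_iff₀ ht0]
      nlinarith [hkeyR]
  have hcont : Tendsto (fun p : ℝ × Euc n => (inner ℝ vb p.2 : ℝ) - r / 2 * p.1 * ‖p.2‖ ^ 2)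
      ((𝓝[>] (0:ℝ)) ×ˢ 𝓝 w) (𝓝 (inner ℝ vb w : ℝ)) := by
    have hc : Continuous (fun p : ℝ × Euc n => (inner ℝ vb p.2 : ℝ) - r / 2 * p.1 * ‖p.2‖ ^ 2) :=
      (Continuous.inner continuous_const continuous_snd).sub
        ((continuous_const.mul continuous_fst).mul ((continuous_snd.norm).pow 2))
    have h5 : (𝓝[>] (0:ℝ)) ×ˢ 𝓝 w ≤ 𝓝 ((0:ℝ), w) := by
      rw [nhds_prod_eq]; exact Filter.prod_mono nhdsWithin_le_nhds le_rfl
    have := (hc.tendsto ((0:ℝ), w)).mono_left h5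
    simpa using this
  have hlim : Filter.liminf
      (fun p : ℝ × Euc n => (((inner ℝ vb p.2 : ℝ) - r / 2 * p.1 * ‖p.2‖ ^ 2 : ℝ) : EReal))
      ((𝓝[>] (0:ℝ)) ×ˢ 𝓝 w) = ((inner ℝ vb w : ℝ) : EReal) :=
    (EReal.tendsto_coe.mpr hcont).liminf_eq
  calc ((inner ℝ vb w : ℝ) : EReal) = _ := hlim.symm
    _ ≤ subderiv φ xb w := Filter.liminf_le_liminf hev

private lemma stmt7_upper {n : ℕ} (φ : Euc n → EReal) (xb vb : Euc n) (c : ℝ)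
    (hbot : ∀ x, φ x ≠ ⊥) (hxb : φ xb = (c : EReal)) (w : Euc n)
    (hne : secondSubderiv φ xb vb w ≠ ⊤) :
    subderiv φ xb w ≤ ((inner ℝ vb w : ℝ) : EReal) := by
  by_contra hlt
  push_neg at hlt
  obtain ⟨b, hb1, hb2⟩ := EReal.exists_between_coe_real hlt
  have hbv : (inner ℝ vb w : ℝ) < b := by exact_mod_cast hb1
  set ε : ℝ := b - (inner ℝ vb w : ℝ) with hε
  have hεpos : 0 < ε := sub_pos.mpr hbv
  have hE1 : ∀ᶠ p : ℝ × Euc n in (𝓝[>] (0:ℝ)) ×ˢ 𝓝 w,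
      (b : EReal) < ((p.1⁻¹ : ℝ) : EReal) * (φ (xb + p.1 • p.2) - φ xb) :=
    Filter.eventually_lt_of_lt_liminf hb2
  have hE2 : ∀ᶠ p : ℝ × Euc n in (𝓝[>] (0:ℝ)) ×ˢ 𝓝 w,
      (inner ℝ vb p.2 : ℝ) < (inner ℝ vb w : ℝ) + ε / 2 := by
    have hc : Tendsto (fun p : ℝ × Euc n => (inner ℝ vb p.2 : ℝ))
        ((𝓝[>] (0:ℝ)) ×ˢ 𝓝 w) (𝓝 (inner ℝ vb w : ℝ)) := by
      have hcc : Continuous (fun p : ℝ × Euc n => (inner ℝ vb p.2 : ℝ)) :=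
        Continuous.inner continuous_const continuous_snd
      have h5 : (𝓝[>] (0:ℝ)) ×ˢ 𝓝 w ≤ 𝓝 ((0:ℝ), w) := by
        rw [nhds_prod_eq]; exact Filter.prod_mono nhdsWithin_le_nhds le_rfl
      exact (hcc.tendsto ((0:ℝ), w)).mono_left h5
    exact hc.eventually (Iio_mem_nhds (by linarith))
  have hE3 : ∀ᶠ p : ℝ × Euc n in (𝓝[>] (0:ℝ)) ×ˢ 𝓝 w, 0 < p.1 :=
    Filter.Eventually.prod_inl (self_mem_nhdsWithin) _
  have hev : ∀ᶠ p : ℝ × Euc n in (𝓝[>] (0:ℝ)) ×ˢ 𝓝 w,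
      ((ε / 2 / p.1 : ℝ) : EReal) ≤ quadDiff φ xb vb p.1 p.2 := by
    filter_upwards [hE1, hE2, hE3] with p h1 h2 h3
    unfold quadDiff
    rcases eq_or_ne (φ (xb + p.1 • p.2)) ⊤ with htop | hnet
    · rw [htop, hxb, EReal.top_sub_coe, EReal.top_sub_coe,
        EReal.mul_top_of_pos (by exact_mod_cast (by positivity : (0:ℝ) < 2 / p.1 ^ 2) :
          (0:EReal) < ((2 / p.1 ^ 2 : ℝ) : EReal))]
      exact le_top
    · have hne' := hbot (xb + p.1 • p.2)
      rw [← EReal.coe_toReal hnet hne'] at h1 ⊢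
      set ρ := (φ (xb + p.1 • p.2)).toReal
      rw [hxb, ← EReal.coe_sub, ← EReal.coe_mul, EReal.coe_lt_coe_iff] at h1
      rw [hxb, ← EReal.coe_sub, ← EReal.coe_sub, ← EReal.coe_mul, EReal.coe_le_coe_iff]
      rw [inv_mul_eq_div, lt_div_iff₀ h3] at h1
      rw [div_le_iff₀ (by positivity : (0:ℝ) < p.1), div_mul_eq_mul_div,
        div_mul_eq_mul_div, div_le_div_iff₀ (by norm_num) (by positivity)]
      nlinarith [h1, h2, h3, sq_nonneg p.1]
  have htop' : Filter.liminf (fun p : ℝ × Euc n => ((ε / 2 / p.1 : ℝ) : EReal))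
      ((𝓝[>] (0:ℝ)) ×ˢ 𝓝 w) = (⊤ : EReal) := by
    have ht : Tendsto (fun p : ℝ × Euc n => ε / 2 / p.1) ((𝓝[>] (0:ℝ)) ×ˢ 𝓝 w) atTop := by
      have h6 : Tendsto (fun t : ℝ => ε / 2 / t) (𝓝[>] (0:ℝ)) atTop := by
        simp only [div_eq_mul_inv]
        exact Tendsto.const_mul_atTop (by positivity) tendsto_inv_nhdsGT_zero
      exact h6.comp Filter.tendsto_fst
    refine Filter.Tendsto.liminf_eq ?_
    rw [EReal.tendsto_nhds_top_iff_real]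
    intro x
    filter_upwards [ht.eventually (Filter.eventually_gt_atTop x)] with p hp
    exact_mod_cast hp
  have : (⊤ : EReal) ≤ secondSubderiv φ xb vb w := by
    rw [← htop']
    exact Filter.liminf_le_liminf hev
  exact hne (top_le_iff.mp this)

private lemma stmt7_rev {n : ℕ} (φ : Euc n → EReal) (xb vb : Euc n) (c : ℝ)
    (hbot : ∀ x, φ x ≠ ⊥) (hxb : φ xb = (c : EReal)) (w : Euc n)
    (hT : (secondTangent {p : Euc n × ℝ | φ p.1 ≤ (p.2 : EReal)} (xb, c)
        (w, (inner ℝ vb w : ℝ))).Nonempty) :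
    secondSubderiv φ xb vb w ≠ ⊤ := by
  obtain ⟨u, t, uk, htpos, ht0, huk, hmem⟩ := hT
  set M : ℝ := u.2 - (inner ℝ vb u.1 : ℝ) + 1 with hM
  -- the sequence in ℝ × Euc n
  have hu1 : Tendsto (fun k => (uk k).1) atTop (𝓝 u.1) :=
    (continuous_fst.tendsto u).comp huk
  have hu2 : Tendsto (fun k => (uk k).2) atTop (𝓝 u.2) :=
    (continuous_snd.tendsto u).comp huk
  have hseq : Tendsto (fun k => (t k, w + (t k / 2) • (uk k).1)) atTop
      ((𝓝[>] (0:ℝ)) ×ˢ 𝓝 w) := by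
    refine Filter.Tendsto.prodMk ?_ ?_
    · exact tendsto_nhdsWithin_of_tendsto_nhds_of_eventually_within _ ht0
        (Filter.Eventually.of_forall htpos)
    · have ht02 : Tendsto (fun k => t k / 2) atTop (𝓝 (0:ℝ)) := by
        simpa using ht0.div_const 2
      have hsm : Tendsto (fun k => (t k / 2) • (uk k).1) atTop (𝓝 ((0:ℝ) • u.1)) :=
        ht02.smul hu1
      have h9 := (tendsto_const_nhds : Tendsto (fun _ : ℕ => w) atTop (𝓝 w)).add hsm
      simpa using h9
  have hMev : ∀ᶠ k in atTop, (uk k).2 - (inner ℝ vb (uk k).1 : ℝ) ≤ M := by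
    have hc : Tendsto (fun k => (uk k).2 - (inner ℝ vb (uk k).1 : ℝ)) atTop
        (𝓝 (u.2 - (inner ℝ vb u.1 : ℝ))) :=
      hu2.sub ((Continuous.inner continuous_const continuous_id).tendsto u.1 |>.comp hu1)
    exact hc.eventually (Iic_mem_nhds (by rw [hM]; exact lt_add_one _))
  have hqev : ∀ᶠ k in atTop,
      quadDiff φ xb vb (t k) (w + (t k / 2) • (uk k).1) ≤ ((M : ℝ) : EReal) := by
    filter_upwards [hMev] with k hMk
    have htk := htpos k
    have hmemk := hmem k
    simp only [Set.mem_setOf_eq, Prod.fst_add, Prod.snd_add, Prod.smul_fst,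
      Prod.smul_snd, smul_eq_mul] at hmemk
    -- hmemk : φ (xb + t k • w + (t k ^ 2 / 2) • (uk k).1) ≤ coe (c + t k * ⟨v,w⟩ + t k^2/2 * (uk k).2)
    have hpt : xb + (t k) • (w + (t k / 2) • (uk k).1)
        = xb + (t k) • w + ((t k) ^ 2 / 2) • (uk k).1 := by
      rw [smul_add, smul_smul, add_assoc]
      ring_nf
    have hiv : (inner ℝ vb (w + (t k / 2) • (uk k).1) : ℝ)
        = (inner ℝ vb w : ℝ) + (t k / 2) * (inner ℝ vb (uk k).1 : ℝ) := by
      rw [inner_add_right, real_inner_smul_right]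
    unfold quadDiff
    rw [hpt]
    have hnetop : φ (xb + t k • w + (t k ^ 2 / 2) • (uk k).1) ≠ ⊤ := by
      intro h
      rw [h] at hmemk
      exact ((EReal.coe_lt_top _).not_ge hmemk)
    have hneb := hbot (xb + t k • w + (t k ^ 2 / 2) • (uk k).1)
    rw [← EReal.coe_toReal hnetop hneb] at hmemk ⊢
    set ρ := (φ (xb + t k • w + (t k ^ 2 / 2) • (uk k).1)).toReal
    have hρ : ρ ≤ c + t k * (inner ℝ vb w : ℝ) + t k ^ 2 / 2 * (uk k).2 := by
      exact_mod_cast hmemk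
    rw [hxb, ← EReal.coe_sub, ← EReal.coe_sub, ← EReal.coe_mul, EReal.coe_le_coe_iff, hiv]
    rw [div_mul_eq_mul_div, div_le_iff₀ (by positivity : (0:ℝ) < t k ^ 2)]
    nlinarith [mul_le_mul_of_nonneg_left hMk (by positivity : (0:ℝ) ≤ t k ^ 2)]
  have hle : secondSubderiv φ xb vb w ≤ ((M : ℝ) : EReal) := by
    have h7 : secondSubderiv φ xb vb w ≤
        Filter.liminf (fun p : ℝ × Euc n => quadDiff φ xb vb p.1 p.2)
          (Filter.map (fun k => (t k, w + (t k / 2) • (uk k).1)) atTop) :=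
      Filter.liminf_le_liminf_of_le hseq
    have h8 : Filter.liminf (fun p : ℝ × Euc n => quadDiff φ xb vb p.1 p.2)
        (Filter.map (fun k => (t k, w + (t k / 2) • (uk k).1)) atTop)
        = Filter.liminf (fun k => quadDiff φ xb vb (t k) (w + (t k / 2) • (uk k).1)) atTop := by
      simp only [Filter.liminf, Filter.map_map]
      rfl
    rw [h8] at h7
    exact h7.trans (Filter.liminf_le_of_frequently_le hqev.frequently)
  exact fun h => by rw [h] at hle; exact ((EReal.coe_lt_top _).not_ge hle)

end Stmt7Aux
/-- domain of the second subderivative equals the critical cone under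
nonemptiness of second-order tangent sets to the epigraph. -/
theorem stmt7 {n : ℕ} (φ : Euc n → EReal) (xb vb : Euc n) (c : ℝ)
    (hbot : ∀ x, φ x ≠ ⊥) (hxb : φ xb = (c : EReal))
    (hprox : vb ∈ proxSubdiff φ xb)
    (hT : ∀ w : Euc n, subderiv φ xb w = ((inner ℝ vb w : ℝ) : EReal) →
      (secondTangent {p : Euc n × ℝ | φ p.1 ≤ (p.2 : EReal)} (xb, c)
        (w, (inner ℝ vb w : ℝ))).Nonempty) :
    {w : Euc n | secondSubderiv φ xb vb w ≠ ⊤} = critCone φ xb vb := by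

  ext w
  simp only [Set.mem_setOf_eq, critCone]
  constructor
  · intro hne
    exact le_antisymm (stmt7_upper φ xb vb c hbot hxb w hne)
      (stmt7_lower φ xb vb c hbot hxb hprox w)
  · intro hcrit
    exact stmt7_rev φ xb vb c hbot hxb w (hT w hcrit)
end
end

section
/- Let φ = ϑ∘f be fully subamenable at x̄: f: ℝⁿ → ℝᵐ is twice differentiable at x̄, ϑ: ℝᵐ → ℝ ∪ {∞} is convex piecewise linear-quadratic with f(x̄) ∈ dom ϑ, and the mapping x ↦ f(x) − dom ϑ is metrically subregular at (x̄,0) with constant κ. Then for every tangent vector w ∈ T_Ω(x̄), where Ω = {x : f(x) ∈ dom ϑ}, the second-order tangent set T²_Ω(x̄, w) is nonempty. -/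
open Filter Topology Metric Set

noncomputable section

set_option maxHeartbeats 2000000 in
/-- nonemptiness of second-order tangent sets to the preimage set for fully
subamenable compositions. -/
theorem stmt8 {n m : ℕ} (f : Euc n → Euc m) (ϑ : Euc m → EReal) (xb : Euc n)
    (hf : TwiceDiffAt f xb) (hbot : ∀ y, ϑ y ≠ ⊥) (hplq : IsPLQ ϑ)
    (hconv : ERealConvexOn ϑ) (hdom : ϑ (f xb) ≠ ⊤)
    (κ : ℝ) (hmsqc : MSQCAt f (edom ϑ) xb κ) :
    ∀ w ∈ tangentConeB (f ⁻¹' edom ϑ) xb,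
      (secondTangent (f ⁻¹' edom ϑ) xb w).Nonempty := by
  intro w hw
  classical
  set D : Set (Euc m) := edom ϑ with hD
  set Ω : Set (Euc n) := f ⁻¹' D with hΩdef
  obtain ⟨t, wk, htpos, ht0, hwk, hmem⟩ := hw
  obtain ⟨R⟩ := hplq
  have hfdiff : DifferentiableAt ℝ f xb := hf.1.self_of_nhds
  set Df := fderiv ℝ f xb with hDf
  set y := f xb with hy
  set d := Df w with hd
  -- the base points
  set xk : ℕ → Euc n := fun k => xb + t k • wk k with hxk
  have htne : ∀ k, t k ≠ 0 := fun k => ne_of_gt (htpos k)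
  have hxk_tendsto : Tendsto xk atTop (𝓝 xb) := by
    have h1 : Tendsto (fun k => t k • wk k) atTop (𝓝 ((0:ℝ) • w)) := ht0.smul hwk
    rw [zero_smul] at h1
    simpa using tendsto_const_nhds.add h1
  -- difference quotients dk → d
  set dk : ℕ → Euc m := fun k => (t k)⁻¹ • (f (xk k) - y) with hdk
  have hsmul_dk : ∀ k, t k • dk k = f (xk k) - y := fun k => smul_inv_smul₀ (htne k) _
  have hdk_tendsto : Tendsto dk atTop (𝓝 d) := by
    have hLO := (hfdiff.hasFDerivAt.isLittleO).comp_tendsto hxk_tendsto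
    have hsub : ∀ k, xk k - xb = t k • wk k := fun k => by simp [hxk]
    have hzero : Tendsto (fun k => dk k - Df (wk k)) atTop (𝓝 0) := by
      rw [NormedAddCommGroup.tendsto_nhds_zero]
      intro ε hε
      have hwb : ∀ᶠ k in atTop, ‖wk k‖ < ‖w‖ + 1 :=
        hwk.norm.eventually_lt_const (lt_add_one _)
      have hcpos : 0 < ε / (2 * (‖w‖ + 1)) := by positivity
      filter_upwards [hLO.def hcpos, hwb] with k hk hwkb
      simp only [Function.comp_apply] at hk
      rw [hsub k] at hk
      have hval : dk k - Df (wk k) = (t k)⁻¹ • (f (xk k) - y - Df (t k • wk k)) := by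
        rw [map_smul, smul_sub, hdk]
        simp [smul_smul, inv_mul_cancel₀ (htne k)]
      rw [hval, norm_smul, norm_inv, Real.norm_eq_abs, abs_of_pos (htpos k)]
      have hnn : ‖t k • wk k‖ = t k * ‖wk k‖ := by
        rw [norm_smul, Real.norm_eq_abs, abs_of_pos (htpos k)]
      have h2 : ‖f (xk k) - y - Df (t k • wk k)‖ ≤ ε / (2 * (‖w‖ + 1)) * (t k * ‖wk k‖) := by
        simpa [hnn] using hk
      have hwpos : (0:ℝ) < ‖w‖ + 1 := by positivity
      have htinv : (0:ℝ) < (t k)⁻¹ := inv_pos.2 (htpos k)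
      calc (t k)⁻¹ * ‖f (xk k) - y - Df (t k • wk k)‖
          ≤ (t k)⁻¹ * (ε / (2 * (‖w‖ + 1)) * (t k * ‖wk k‖)) := by
            exact mul_le_mul_of_nonneg_left h2 htinv.le
        _ = ε / (2 * (‖w‖ + 1)) * ‖wk k‖ := by
            rw [show (t k)⁻¹ * (ε / (2 * (‖w‖ + 1)) * (t k * ‖wk k‖))
              = ((t k)⁻¹ * t k) * (ε / (2 * (‖w‖ + 1)) * ‖wk k‖) by ring,
              inv_mul_cancel₀ (htne k), one_mul]
        _ < ε := by
            rw [div_mul_eq_mul_div, div_lt_iff₀ (by positivity)]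
            nlinarith [norm_nonneg (wk k), hwkb]
    have hDfwk : Tendsto (fun k => Df (wk k)) atTop (𝓝 d) :=
      (Df.continuous.tendsto w).comp hwk
    have := hzero.add hDfwk
    simpa using this
  have hyk_tendsto : Tendsto (fun k => f (xk k)) atTop (𝓝 y) := by
    have h1 : Tendsto (fun k => t k • dk k) atTop (𝓝 ((0:ℝ) • d)) := ht0.smul hdk_tendsto
    rw [zero_smul] at h1
    have : Tendsto (fun k => y + t k • dk k) atTop (𝓝 (y + 0)) := tendsto_const_nhds.add h1
    simpa [hsmul_dk] using this
  -- pigeonhole: some piece contains f (xk k) frequently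
  have hpiece : ∃ i, ∃ᶠ k in atTop, f (xk k) ∈ R.piece i := by
    by_contra hc
    push_neg at hc
    obtain ⟨k, hk⟩ := (Filter.eventually_all.2 hc).exists
    have : f (xk k) ∈ ⋃ i, R.piece i := R.dom_eq ▸ hmem k
    obtain ⟨i, hi⟩ := Set.mem_iUnion.1 this
    exact hk i hi
  obtain ⟨i, hfreq⟩ := hpiece
  obtain ⟨kc, c, b, hpoly⟩ := R.poly i
  -- y belongs to the piece
  have hclosed : IsClosed (R.piece i) := by
    rw [hpoly]
    have : {x : Euc m | ∀ j, (inner ℝ (c j) x : ℝ) ≤ b j}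
        = ⋂ j, {x | (inner ℝ (c j) x : ℝ) ≤ b j} := by ext x; simp
    rw [this]
    exact isClosed_iInter fun j => isClosed_le (continuous_const.inner continuous_id)
      continuous_const
  have hymem : y ∈ R.piece i := by
    have := mem_closure_of_frequently_of_tendsto hfreq hyk_tendsto
    rwa [hclosed.closure_eq] at this
  -- tangent inequality for active constraints
  have hactive : ∀ j, (inner ℝ (c j) y : ℝ) = b j → (inner ℝ (c j) d : ℝ) ≤ 0 := by
    intro j hj
    have hfreq2 : ∃ᶠ k in atTop, (inner ℝ (c j) (dk k) : ℝ) ≤ 0 := by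
      refine hfreq.mono fun k hk => ?_
      have hyk : (inner ℝ (c j) (f (xk k)) : ℝ) ≤ b j := by
        rw [hpoly] at hk; exact hk j
      have : (inner ℝ (c j) (dk k) : ℝ) = (t k)⁻¹ * ((inner ℝ (c j) (f (xk k)) : ℝ) - b j) := by
        rw [hdk]
        simp only [real_inner_smul_right, inner_sub_right, hj]
      rw [this]
      exact mul_nonpos_of_nonneg_of_nonpos (inv_pos.2 (htpos k)).le (by linarith)
    have htd : Tendsto (fun k => (inner ℝ (c j) (dk k) : ℝ)) atTop (𝓝 (inner ℝ (c j) d : ℝ)) :=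
      tendsto_const_nhds.inner hdk_tendsto
    have := mem_closure_of_frequently_of_tendsto
      (hfreq2.mono fun k hk => Set.mem_Iic.2 hk) htd
    rwa [isClosed_Iic.closure_eq] at this
  -- the ray y + s • d stays in the piece for small s > 0
  have hray : ∀ᶠ s in 𝓝[>] (0:ℝ), y + s • d ∈ R.piece i := by
    rw [hpoly]
    have : ∀ j, ∀ᶠ s in 𝓝[>] (0:ℝ), (inner ℝ (c j) (y + s • d) : ℝ) ≤ b j := by
      intro j
      have hyj : (inner ℝ (c j) y : ℝ) ≤ b j := by
        rw [hpoly] at hymem; exact hymem j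
      by_cases hj : (inner ℝ (c j) y : ℝ) = b j
      · have hdj := hactive j hj
        filter_upwards [self_mem_nhdsWithin] with s hs
        rw [inner_add_right, real_inner_smul_right, hj]
        nlinarith [Set.mem_Ioi.1 hs]
      · have hlt : (inner ℝ (c j) y : ℝ) < b j := lt_of_le_of_ne hyj hj
        have hcont : Tendsto (fun s : ℝ => (inner ℝ (c j) (y + s • d) : ℝ)) (𝓝[>] 0)
            (𝓝 (inner ℝ (c j) y : ℝ)) := by
          have : Tendsto (fun s : ℝ => (inner ℝ (c j) (y + s • d) : ℝ)) (𝓝 0)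
              (𝓝 (inner ℝ (c j) (y + (0:ℝ) • d) : ℝ)) := by
            apply Continuous.tendsto
            exact continuous_const.inner (continuous_const.add (continuous_id.smul
              continuous_const))
          simpa using this.mono_left nhdsWithin_le_nhds
        exact (hcont.eventually_lt_const hlt).mono fun s hs => hs.le
    exact (Filter.eventually_all.2 this).mono fun s hs => hs
  -- Taylor bound
  have htaylor : ∃ C : ℝ, 0 ≤ C ∧
      ∀ᶠ h in 𝓝 (0 : Euc n), ‖f (xb + h) - y - Df h‖ ≤ C * ‖h‖^2 := by
    obtain ⟨c0, hc0⟩ := hf.2.isBigO_sub.bound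
    set C := max c0 0 with hC
    obtain ⟨r1, hr1, hball1⟩ := Metric.eventually_nhds_iff.1 hf.1
    obtain ⟨r2, hr2, hball2⟩ := Metric.eventually_nhds_iff.1 hc0
    set r := min r1 r2 with hr
    refine ⟨C, le_max_right _ _, ?_⟩
    have hrpos : 0 < r := lt_min hr1 hr2
    filter_upwards [Metric.ball_mem_nhds (0 : Euc n) (half_pos hrpos)] with h hh
    have hnorm : ‖h‖ < r / 2 := by simpa using hh
    have hsub : Metric.closedBall xb ‖h‖ ⊆ Metric.ball xb r :=
      Metric.closedBall_subset_ball (by linarith)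
    have key : ‖f (xb + h) - f xb - Df ((xb + h) - xb)‖ ≤ (C * ‖h‖) * ‖(xb + h) - xb‖ := by
      apply Convex.norm_image_sub_le_of_norm_fderiv_le' (f := f)
        (fun z hz => hball1 (lt_of_lt_of_le (Metric.mem_ball.1 (hsub hz)) (min_le_left _ _)))
        ?_ (convex_closedBall xb ‖h‖) (Metric.mem_closedBall_self (norm_nonneg h)) ?_
      · intro z hz
        have hz2 : dist z xb < r2 := lt_of_lt_of_le (Metric.mem_ball.1 (hsub hz)) (min_le_right _ _)
        calc ‖fderiv ℝ f z - Df‖ ≤ c0 * ‖z - xb‖ := hball2 hz2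
          _ ≤ C * ‖h‖ := by
              have h1 : ‖z - xb‖ ≤ ‖h‖ := by
                rw [← dist_eq_norm]; exact Metric.mem_closedBall.1 hz
              nlinarith [norm_nonneg (z - xb), le_max_left c0 (0:ℝ), le_max_right c0 (0:ℝ),
                norm_nonneg h]
      · simp [Metric.mem_closedBall, dist_eq_norm]
    rw [hy]
    simpa [add_sub_cancel_left, sq, mul_assoc, mul_comm, mul_left_comm] using key
  obtain ⟨C, hCnn, htay⟩ := htaylor
  set K : ℝ := κ * (C * ‖w‖^2) + 1 with hK
  have hKpos : 0 < K := by
    have h1 : 0 ≤ κ * (C * ‖w‖^2) := mul_nonneg hmsqc.1 (by positivity)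
    rw [hK]; linarith
  have hΩne : Ω.Nonempty := ⟨xb, hdom⟩
  -- the main eventual estimate
  have hmain : ∀ᶠ s in 𝓝[>] (0:ℝ), ∃ z ∈ Ω, dist (xb + s • w) z < K * s^2 := by
    have htend1 : Tendsto (fun s : ℝ => s • w) (𝓝[>] 0) (𝓝 (0 : Euc n)) := by
      have : Tendsto (fun s : ℝ => s • w) (𝓝 0) (𝓝 ((0:ℝ) • w)) :=
        (continuous_id.smul continuous_const).tendsto 0
      rw [zero_smul] at this
      exact this.mono_left nhdsWithin_le_nhds
    have htend2 : Tendsto (fun s : ℝ => xb + s • w) (𝓝[>] 0) (𝓝 xb) := by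
      have := Tendsto.add
        (tendsto_const_nhds : Tendsto (fun _ : ℝ => xb) (𝓝[>] (0:ℝ)) (𝓝 xb)) htend1
      simpa using this
    filter_upwards [htend1.eventually htay, hray, htend2.eventually hmsqc.2,
      self_mem_nhdsWithin] with s htayl hrays hmsq hspos
    have hspos' : (0:ℝ) < s := hspos
    -- f (xb + s • w) is close to D
    have hmemD : y + s • d ∈ D := by
      rw [hD, R.dom_eq]
      exact Set.mem_iUnion_of_mem i hrays
    have hdist1 : Metric.infDist (f (xb + s • w)) D ≤ C * ‖w‖^2 * s^2 := by
      calc Metric.infDist (f (xb + s • w)) D ≤ dist (f (xb + s • w)) (y + s • d) :=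
            Metric.infDist_le_dist_of_mem hmemD
        _ = ‖f (xb + s • w) - y - Df (s • w)‖ := by
            rw [dist_eq_norm, hd, map_smul]
            congr 1
            abel
        _ ≤ C * ‖s • w‖^2 := htayl
        _ = C * ‖w‖^2 * s^2 := by
            rw [norm_smul, Real.norm_eq_abs, abs_of_pos hspos', mul_pow]
            ring
    have hdist2 : Metric.infDist (xb + s • w) Ω ≤ κ * (C * ‖w‖^2) * s^2 := by
      calc Metric.infDist (xb + s • w) Ω ≤ κ * Metric.infDist (f (xb + s • w)) D := hmsq
        _ ≤ κ * (C * ‖w‖^2 * s^2) := mul_le_mul_of_nonneg_left hdist1 hmsqc.1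
        _ = κ * (C * ‖w‖^2) * s^2 := by ring
    have hlt : Metric.infDist (xb + s • w) Ω < K * s^2 := by
      have hs2 : 0 < s^2 := by positivity
      nlinarith
    exact (Metric.infDist_lt_iff hΩne).1 hlt
  obtain ⟨δ, hδmem, hδ⟩ := mem_nhdsGT_iff_exists_Ioo_subset.1 hmain
  have hδpos : 0 < δ := hδmem
  -- choose the sequence
  set s : ℕ → ℝ := fun k => δ / 2 * (1 / ((k:ℝ) + 1)) with hs
  have hspos : ∀ k, 0 < s k := fun k => by positivity
  have hslt : ∀ k, s k < δ := by
    intro k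
    have h1 : (1:ℝ) / ((k:ℝ) + 1) ≤ 1 := by
      rw [div_le_one (by positivity)]
      simp
    calc s k ≤ δ / 2 * 1 := by
          apply mul_le_mul_of_nonneg_left h1 (by positivity)
      _ < δ := by linarith
  have hstendsto : Tendsto s atTop (𝓝 0) := by
    have := tendsto_one_div_add_atTop_nhds_zero_nat.const_mul (δ / 2)
    simpa [hs] using this
  have hP : ∀ k, ∃ z ∈ Ω, dist (xb + s k • w) z < K * (s k)^2 :=
    fun k => hδ ⟨hspos k, hslt k⟩
  choose zk hzΩ hzd using hP
  set uk : ℕ → Euc n := fun k => (2 / (s k)^2) • (zk k - xb - s k • w) with huk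
  have hukmem : ∀ k, xb + s k • w + ((s k)^2 / 2) • uk k = zk k := by
    intro k
    have hsne : (s k)^2 ≠ 0 := by positivity
    rw [huk]
    simp only [smul_smul]
    rw [show (s k)^2 / 2 * (2 / (s k)^2) = 1 by field_simp [(hspos k).ne'], one_smul]
    abel
  have hukbd : ∀ k, uk k ∈ Metric.closedBall (0 : Euc n) (2 * K) := by
    intro k
    rw [Metric.mem_closedBall, dist_zero_right, huk]
    have hs2 : (0:ℝ) < (s k)^2 := by positivity
    have h1 : ‖zk k - xb - s k • w‖ = dist (xb + s k • w) (zk k) := by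
      rw [dist_eq_norm, ← norm_neg]
      congr 1
      abel
    rw [norm_smul, Real.norm_eq_abs, abs_of_pos (by positivity : (0:ℝ) < 2 / (s k)^2), h1]
    have h2 : dist (xb + s k • w) (zk k) ≤ K * (s k)^2 := (hzd k).le
    calc 2 / (s k)^2 * dist (xb + s k • w) (zk k) ≤ 2 / (s k)^2 * (K * (s k)^2) := by
          apply mul_le_mul_of_nonneg_left h2 (by positivity)
      _ = 2 * K := by field_simp [(hspos k).ne']
  obtain ⟨u, _, φ, hφ, hφconv⟩ :=
    (isCompact_closedBall (0 : Euc n) (2 * K)).tendsto_subseq hukbd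
  refine ⟨u, s ∘ φ, uk ∘ φ, fun k => hspos (φ k), hstendsto.comp hφ.tendsto_atTop,
    hφconv, fun k => ?_⟩
  show xb + s (φ k) • w + ((s (φ k))^2 / 2) • uk (φ k) ∈ Ω
  rw [hukmem (φ k)]
  exact hzΩ (φ k)
end
end

section
/- Let φ = ϑ∘f be fully subamenable at x̄ (f twice differentiable at x̄, ϑ convex piecewise linear-quadratic, and x ↦ f(x) − dom ϑ metrically subregular at (x̄,0)). If w ∈ T_Ω(x̄) with Ω = {x : f(x) ∈ dom ϑ} and z ∈ ℝⁿ satisfies ∇f(x̄)z + ∇²f(x̄)(w,w) ∈ T²_{dom ϑ}(f(x̄), ∇f(x̄)w), then z ∈ T²_Ω(x̄, w); moreover there exist ε > 0 and an arc ξ: [0,ε] → Ω with ξ(0) = x̄, ξ'₊(0) = w, and ξ''₊(0) = z. -/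
open Filter Topology Metric Set

noncomputable section

section Helpers

lemma tendsto_poly_seq (α β γ : ℝ) (t g : ℕ → ℝ) (htlim : Tendsto t atTop (𝓝 0))
    (hg : Tendsto g atTop (𝓝 γ)) :
    Tendsto (fun k => α + t k * β + (t k)^2/2 * g k) atTop (𝓝 α) := by
  have h1 : Tendsto (fun k => t k * β) atTop (𝓝 (0 * β)) :=
    htlim.mul (tendsto_const_nhds (x := β))
  have h2 : Tendsto (fun k => (t k)^2/2 * g k) atTop (𝓝 (0^2/2 * γ)) :=
    ((htlim.pow 2).div_const 2).mul hg
  have := ((tendsto_const_nhds (x := α) (f := atTop (α := ℕ))).add h1).add h2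
  simpa using this

lemma tendsto_poly_cont (α β γ : ℝ) :
    Tendsto (fun s : ℝ => α + s * β + s^2/2 * γ) (𝓝[>] 0) (𝓝 α) := by
  have : Tendsto (fun s : ℝ => α + s * β + s^2/2 * γ) (𝓝 0) (𝓝 (α + 0*β + 0^2/2*γ)) := by
    apply Tendsto.add
    apply Tendsto.add
    · exact tendsto_const_nhds
    · exact tendsto_id.mul tendsto_const_nhds
    · exact ((tendsto_id.pow 2).div_const 2).mul tendsto_const_nhds
  simpa using this.mono_left nhdsWithin_le_nhds

lemma scalar_poly (α β γ : ℝ) (t : ℕ → ℝ) (g : ℕ → ℝ)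
    (ht0 : ∀ k, 0 < t k) (htlim : Tendsto t atTop (𝓝 0))
    (hg : Tendsto g atTop (𝓝 γ))
    (h : ∀ k, α + t k * β + (t k)^2/2 * g k ≤ 0) :
    ∀ᶠ s in 𝓝[>] (0:ℝ), α + s * β + s^2/2 * γ ≤ 0 := by
  have hα : α ≤ 0 :=
    le_of_tendsto (tendsto_poly_seq α β γ t g htlim hg) (Eventually.of_forall h)
  rcases lt_or_eq_of_le hα with hαlt | hαeq
  · filter_upwards [(tendsto_poly_cont α β γ).eventually_lt_const hαlt] with s hs
    exact le_of_lt hs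
  · have hβ : β ≤ 0 := by
      have hq : ∀ k, β + t k / 2 * g k ≤ 0 := by
        intro k
        by_contra hc
        push_neg at hc
        have := h k
        nlinarith [ht0 k, mul_pos (ht0 k) hc]
      have htot : Tendsto (fun k => β + t k / 2 * g k) atTop (𝓝 (β + 0/2*γ)) :=
        (tendsto_const_nhds (x := β) (f := atTop (α := ℕ))).add ((htlim.div_const 2).mul hg)
      exact le_of_tendsto (by simpa using htot) (Eventually.of_forall hq)
    rcases lt_or_eq_of_le hβ with hβlt | hβeq
    · have hcont : Tendsto (fun s : ℝ => β + s/2 * γ) (𝓝[>] 0) (𝓝 (β + 0/2*γ)) := by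
        refine Tendsto.mono_left ?_ nhdsWithin_le_nhds
        exact (tendsto_const_nhds (x := β)).add ((tendsto_id.div_const 2).mul tendsto_const_nhds)
      rw [show β + 0/2*γ = β by ring] at hcont
      filter_upwards [hcont.eventually_lt_const hβlt, self_mem_nhdsWithin] with s hs hs0
      have hs0' : (0:ℝ) < s := hs0
      nlinarith
    · have hγ : γ ≤ 0 := by
        have hq : ∀ k, g k ≤ 0 := by
          intro k
          by_contra hc
          push_neg at hc
          have := h k
          nlinarith [ht0 k, mul_pos (mul_pos (ht0 k) (ht0 k)) hc]
        exact le_of_tendsto hg (Eventually.of_forall hq)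
      filter_upwards [self_mem_nhdsWithin] with s hs0
      have hs0' : (0:ℝ) < s := hs0
      nlinarith [sq_nonneg s]

/-- For a polyhedral set, membership of a parabolic sequence implies membership of the
whole parabolic arc for small times. -/
lemma poly_arc {m : ℕ} {C : Set (Euc m)} (hC : IsPolyhedral C)
    (y q u : Euc m) (t : ℕ → ℝ) (uk : ℕ → Euc m)
    (ht0 : ∀ k, 0 < t k) (htlim : Tendsto t atTop (𝓝 0))
    (hu : Tendsto uk atTop (𝓝 u))
    (hmem : ∀ k, y + t k • q + ((t k)^2/2) • uk k ∈ C) :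
    ∀ᶠ s in 𝓝[>] (0:ℝ), y + s • q + (s^2/2) • u ∈ C := by
  obtain ⟨N, c, b, rfl⟩ := hC
  have key : ∀ j : Fin N, ∀ᶠ s in 𝓝[>] (0:ℝ),
      (inner ℝ (c j) (y + s • q + (s^2/2) • u) : ℝ) ≤ b j := by
    intro j
    have expand : ∀ (s : ℝ) (v : Euc m),
        (inner ℝ (c j) (y + s • q + (s^2/2) • v) : ℝ)
          = ((inner ℝ (c j) y : ℝ) - b j) + s * (inner ℝ (c j) q : ℝ)
            + s^2/2 * (inner ℝ (c j) v : ℝ) + b j := by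
      intro s v
      rw [inner_add_right, inner_add_right, real_inner_smul_right, real_inner_smul_right]
      ring
    have hseq := scalar_poly ((inner ℝ (c j) y : ℝ) - b j) (inner ℝ (c j) q : ℝ)
      (inner ℝ (c j) u : ℝ) t (fun k => (inner ℝ (c j) (uk k) : ℝ)) ht0 htlim
      ((tendsto_const_nhds (x := c j)).inner hu)
      (by
        intro k
        have := hmem k j
        rw [expand (t k) (uk k)] at this
        linarith)
    filter_upwards [hseq] with s hs
    rw [expand s u]
    linarith
  have := Filter.eventually_all.2 key
  filter_upwards [this] with s hs
  exact hs

/-- The parabolic arc lemma for the domain of a PLQ function. -/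
lemma dom_arc {m : ℕ} {ϑ : Euc m → EReal} (hplq : IsPLQ ϑ) {y q u : Euc m}
    (hu : u ∈ secondTangent (edom ϑ) y q) :
    ∀ᶠ s in 𝓝[>] (0:ℝ), y + s • q + (s^2/2) • u ∈ edom ϑ := by
  obtain ⟨R⟩ := hplq
  obtain ⟨t, uk, ht0, htlim, hulim, hmem⟩ := hu
  have hmem' : ∀ k, y + t k • q + ((t k)^2/2) • uk k ∈ ⋃ i, R.piece i := by
    intro k
    rw [← R.dom_eq]
    exact hmem k
  have pigeon : ∃ i : Fin R.s, ∃ᶠ k in atTop, y + t k • q + ((t k)^2/2) • uk k ∈ R.piece i := by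
    by_contra hcon
    push_neg at hcon
    have : ∀ᶠ k in atTop, ∀ i : Fin R.s,
        y + t k • q + ((t k)^2/2) • uk k ∉ R.piece i := eventually_all.2 hcon
    obtain ⟨k, hk⟩ := this.exists
    obtain ⟨i, hS⟩ := mem_iUnion.1 (hmem' k)
    exact hk i hS
  obtain ⟨i, hfreq⟩ := pigeon
  obtain ⟨φ, hφmono, hφ⟩ := Filter.extraction_of_frequently_atTop hfreq
  have harc := poly_arc (R.poly i) y q u (t ∘ φ) (uk ∘ φ) (fun k => ht0 (φ k))
    (htlim.comp hφmono.tendsto_atTop) (hulim.comp hφmono.tendsto_atTop) hφ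
  filter_upwards [harc] with s hs
  rw [R.dom_eq]
  exact mem_iUnion.2 ⟨i, hs⟩

end Helpers

lemma segment_norm_le {n : ℕ} {v v' : Euc n} (h : v' ∈ segment ℝ 0 v) : ‖v'‖ ≤ ‖v‖ := by
  obtain ⟨a, b, ha, hb, hab, rfl⟩ := h
  rw [smul_zero, zero_add, norm_smul, Real.norm_eq_abs, abs_of_nonneg hb]
  nlinarith [norm_nonneg v]

lemma taylor2 {n m : ℕ} {f : Euc n → Euc m} {x : Euc n} (hf : TwiceDiffAt f x)
    {ε : ℝ} (hε : 0 < ε) :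
    ∀ᶠ v in 𝓝 (0 : Euc n),
      ‖f (x + v) - f x - fderiv ℝ f x v - (1/2 : ℝ) • fderiv ℝ (fderiv ℝ f) x v v‖
        ≤ ε * ‖v‖^2 := by
  set A := fderiv ℝ (fderiv ℝ f) x with hA
  have hsymm : ∀ a b, A a b = A b a := fun a b =>
    second_derivative_symmetric_of_eventually
      (hf.1.mono fun y hy => hy.hasFDerivAt) hf.2.hasFDerivAt a b
  have hlo : ∀ᶠ y in 𝓝 x, ‖fderiv ℝ f y - fderiv ℝ f x - A (y - x)‖ ≤ ε * ‖y - x‖ :=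
    hf.2.hasFDerivAt.isLittleO.def hε
  obtain ⟨δ, hδpos, hδ⟩ := Metric.eventually_nhds_iff.1 (hlo.and hf.1)
  have hball : Metric.ball (0 : Euc n) δ ∈ 𝓝 (0 : Euc n) := Metric.ball_mem_nhds _ hδpos
  filter_upwards [hball] with v hv
  have hvδ : ‖v‖ < δ := by simpa using hv
  set g : Euc n → Euc m :=
    fun v => f (x + v) - fderiv ℝ f x v - (1/2 : ℝ) • A v v with hg
  set g' : Euc n → (Euc n →L[ℝ] Euc m) :=
    fun v' => fderiv ℝ f (x + v') - fderiv ℝ f x - A v' with hg'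
  have hmemδ : ∀ v' ∈ segment ℝ 0 v, dist (x + v') x < δ := by
    intro v' hv'
    have : dist (x + v') x = ‖v'‖ := by simp [dist_eq_norm]
    rw [this]
    exact lt_of_le_of_lt (segment_norm_le hv') hvδ
  have hder : ∀ v' ∈ segment ℝ 0 v, HasFDerivWithinAt g (g' v') (segment ℝ 0 v) v' := by
    intro v' hv'
    have hdiff : DifferentiableAt ℝ f (x + v') := (hδ (hmemδ v' hv')).2
    have h1 : HasFDerivAt (fun v => f (x + v)) (fderiv ℝ f (x + v')) v' := by
      have hcomp := HasFDerivAt.comp v' hdiff.hasFDerivAt ((hasFDerivAt_id v').const_add x)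
      exact hcomp
    have h2 : HasFDerivAt (fun v : Euc n => fderiv ℝ f x v) (fderiv ℝ f x) v' :=
      (fderiv ℝ f x).hasFDerivAt
    have hb : IsBoundedBilinearMap ℝ (fun p : Euc n × Euc n => A p.1 p.2) :=
      A.isBoundedBilinearMap
    have hdiag : HasFDerivAt (fun v : Euc n => (v, v))
        ((ContinuousLinearMap.id ℝ (Euc n)).prod (ContinuousLinearMap.id ℝ (Euc n))) v' :=
      (hasFDerivAt_id v').prodMk (hasFDerivAt_id v')
    have hbil : HasFDerivAt (fun v : Euc n => A v v)
        ((hb.deriv (v', v')).comp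
          ((ContinuousLinearMap.id ℝ (Euc n)).prod (ContinuousLinearMap.id ℝ (Euc n)))) v' := by
      exact HasFDerivAt.comp (g := fun p : Euc n × Euc n => A p.1 p.2)
        (f := fun v : Euc n => (v, v)) v' (hb.hasFDerivAt (v', v')) hdiag
    have h3 : HasFDerivAt (fun v : Euc n => (1/2 : ℝ) • A v v) (A v') v' := by
      have h4 := hbil.const_smul (1/2 : ℝ)
      refine h4.congr_fderiv ?_
      refine ContinuousLinearMap.ext fun h => ?_
      simp only [ContinuousLinearMap.smul_apply, ContinuousLinearMap.coe_comp',
        Function.comp_apply, ContinuousLinearMap.prod_apply, ContinuousLinearMap.coe_id',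
        id_eq, hb.deriv_apply]
      rw [hsymm h v']
      module
    exact ((h1.sub h2).sub h3).hasFDerivWithinAt
  have hbound : ∀ v' ∈ segment ℝ 0 v, ‖g' v'‖ ≤ ε * ‖v‖ := by
    intro v' hv'
    have h := (hδ (hmemδ v' hv')).1
    rw [add_sub_cancel_left] at h
    calc ‖g' v'‖ ≤ ε * ‖v'‖ := h
    _ ≤ ε * ‖v‖ := by
      exact mul_le_mul_of_nonneg_left (segment_norm_le hv') (le_of_lt hε)
  have hmv := (convex_segment (0 : Euc n) v).norm_image_sub_le_of_norm_hasFDerivWithin_le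
    hder hbound (left_mem_segment ℝ 0 v) (right_mem_segment ℝ 0 v)
  have hg0 : g 0 = f x := by simp [hg]
  have heq : f (x + v) - f x - fderiv ℝ f x v - (1/2 : ℝ) • A v v = g v - g 0 := by
    rw [hg0]; simp only [hg]; abel
  rw [heq]
  calc ‖g v - g 0‖ ≤ ε * ‖v‖ * ‖v - 0‖ := hmv
  _ = ε * ‖v‖ ^ 2 := by rw [sub_zero]; ring

set_option maxHeartbeats 1000000 in
lemma rem_bound {n m : ℕ} {f : Euc n → Euc m} {xb : Euc n} (hf : TwiceDiffAt f xb)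
    (w z : Euc n) {ε : ℝ} (hε : 0 < ε) :
    ∀ᶠ t in 𝓝[>] (0:ℝ),
      ‖f (xb + (t • w + (t^2/2) • z)) - (f xb + t • (fderiv ℝ f xb w)
          + (t^2/2) • (fderiv ℝ f xb z + fderiv ℝ (fderiv ℝ f) xb w w))‖ ≤ ε * t^2 := by
  have hM : (0:ℝ) < ‖w‖ + ‖z‖ + 1 := by positivity
  set M : ℝ := ‖w‖ + ‖z‖ + 1 with hMdef
  have hC : (0:ℝ) < ‖fderiv ℝ (fderiv ℝ f) xb w z‖ + ‖fderiv ℝ (fderiv ℝ f) xb z w‖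
      + ‖fderiv ℝ (fderiv ℝ f) xb z z‖ + 1 := by positivity
  set C : ℝ := ‖fderiv ℝ (fderiv ℝ f) xb w z‖ + ‖fderiv ℝ (fderiv ℝ f) xb z w‖
      + ‖fderiv ℝ (fderiv ℝ f) xb z z‖ + 1 with hCdef
  have hε₁ : 0 < ε / (2 * M^2) := by positivity
  have htay := taylor2 hf hε₁
  have hVcont : Tendsto (fun t : ℝ => t • w + (t^2/2) • z) (𝓝[>] (0:ℝ)) (𝓝 0) := by
    have hc : Continuous (fun t : ℝ => t • w + (t^2/2) • z) := by
      apply Continuous.add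
      · exact continuous_id.smul continuous_const
      · exact ((continuous_id.pow 2).div_const 2).smul continuous_const
    have := (hc.tendsto 0).mono_left (nhdsWithin_le_nhds (s := Set.Ioi (0:ℝ)))
    simpa using this
  have hpull := hVcont.eventually htay
  have hδpos : (0:ℝ) < min 1 (ε / (2 * C)) := lt_min one_pos (by positivity)
  have hIoc : Set.Ioc (0:ℝ) (min 1 (ε / (2 * C))) ∈ 𝓝[>] (0:ℝ) :=
    Ioc_mem_nhdsGT_of_mem ⟨le_refl 0, hδpos⟩
  filter_upwards [hpull, hIoc] with t hty htI
  obtain ⟨ht0, htδ⟩ := htI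
  have ht1 : t ≤ 1 := htδ.trans (min_le_left _ _)
  have htC : t ≤ ε / (2 * C) := htδ.trans (min_le_right _ _)
  set A := fderiv ℝ (fderiv ℝ f) xb with hA
  set Vt : Euc n := t • w + (t^2/2) • z with hVt
  have hid : f (xb + Vt) - (f xb + t • (fderiv ℝ f xb w)
        + (t^2/2) • (fderiv ℝ f xb z + A w w))
      = (f (xb + Vt) - f xb - fderiv ℝ f xb Vt - (1/2 : ℝ) • A Vt Vt)
        + (t^3/4) • (A w z) + (t^3/4) • (A z w) + (t^4/8) • A z z := by
    simp only [hVt, map_add, map_smul, ContinuousLinearMap.add_apply,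
      ContinuousLinearMap.smul_apply]
    module
  have hVle : ‖Vt‖ ≤ t * M := by
    have h1 : ‖Vt‖ ≤ ‖t • w‖ + ‖(t^2/2) • z‖ := norm_add_le _ _
    rw [norm_smul, norm_smul, Real.norm_eq_abs, Real.norm_eq_abs,
      abs_of_pos ht0, abs_of_pos (by positivity : (0:ℝ) < t^2/2)] at h1
    have ht2 : t^2 ≤ t := by nlinarith
    have := mul_le_mul_of_nonneg_right ht2 (norm_nonneg z)
    rw [hMdef]
    nlinarith [norm_nonneg w, norm_nonneg z]
  have htaybd : ‖f (xb + Vt) - f xb - fderiv ℝ f xb Vt - (1/2 : ℝ) • A Vt Vt‖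
      ≤ ε / 2 * t^2 := by
    refine le_trans hty ?_
    have h2 : ‖Vt‖^2 ≤ (t * M)^2 := by
      have := norm_nonneg Vt
      nlinarith
    have hM0 : M ≠ 0 := ne_of_gt hM
    have h3 : ε / (2 * M^2) * (t*M)^2 = ε / 2 * t^2 := by
      field_simp
    calc ε / (2 * M^2) * ‖Vt‖^2 ≤ ε / (2 * M^2) * (t*M)^2 :=
      mul_le_mul_of_nonneg_left h2 (le_of_lt hε₁)
    _ = ε / 2 * t^2 := h3
  have hcube : ‖(t^3/4) • (A w z)‖ + ‖(t^3/4) • (A z w)‖ + ‖(t^4/8) • A z z‖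
      ≤ ε / 2 * t^2 := by
    simp only [norm_smul, Real.norm_eq_abs,
      abs_of_pos (show (0:ℝ) < t^3/4 by positivity),
      abs_of_pos (show (0:ℝ) < t^4/8 by positivity)]
    have h4 : t * (2 * C) ≤ ε := by
      rw [← le_div_iff₀ (by positivity : (0:ℝ) < 2*C)]
      exact htC
    have h7 : t^4 ≤ t^3 := pow_le_pow_of_le_one (le_of_lt ht0) ht1 (by norm_num)
    have h8 := mul_le_mul_of_nonneg_right h4 (sq_nonneg t)
    rw [hCdef] at h8
    nlinarith [norm_nonneg (A w z), norm_nonneg (A z w), norm_nonneg (A z z),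
      pow_pos ht0 3, pow_pos ht0 4]
  calc ‖f (xb + Vt) - (f xb + t • (fderiv ℝ f xb w)
        + (t^2/2) • (fderiv ℝ f xb z + A w w))‖
      ≤ ‖f (xb + Vt) - f xb - fderiv ℝ f xb Vt - (1/2 : ℝ) • A Vt Vt‖
        + ‖(t^3/4) • (A w z)‖ + ‖(t^3/4) • (A z w)‖ + ‖(t^4/8) • A z z‖ := by
        rw [hid]
        refine le_trans (norm_add_le _ _) ?_
        have h5 := norm_add_le (f (xb + Vt) - f xb - fderiv ℝ f xb Vt - (1/2 : ℝ) • A Vt Vt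
          + (t^3/4) • (A w z)) ((t^3/4) • (A z w))
        have h6 := norm_add_le (f (xb + Vt) - f xb - fderiv ℝ f xb Vt - (1/2 : ℝ) • A Vt Vt)
          ((t^3/4) • (A w z))
        linarith
  _ ≤ ε / 2 * t^2 + ε / 2 * t^2 := by linarith
  _ = ε * t^2 := by ring

set_option maxHeartbeats 1000000 in
/-- chain rule for second-order tangent sets with parabolic arcs. -/
theorem stmt9 {n m : ℕ} (f : Euc n → Euc m) (ϑ : Euc m → EReal) (xb : Euc n)
    (hf : TwiceDiffAt f xb) (hbot : ∀ y, ϑ y ≠ ⊥) (hplq : IsPLQ ϑ)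
    (hconv : ERealConvexOn ϑ) (hdom : ϑ (f xb) ≠ ⊤)
    (κ : ℝ) (hmsqc : MSQCAt f (edom ϑ) xb κ)
    (w z : Euc n) (hw : w ∈ tangentConeB (f ⁻¹' edom ϑ) xb)
    (hz : fderiv ℝ f xb z + D2 f xb w ∈
      secondTangent (edom ϑ) (f xb) (fderiv ℝ f xb w)) :
    z ∈ secondTangent (f ⁻¹' edom ϑ) xb w ∧
    ∃ ε > (0:ℝ), ∃ ξ : ℝ → Euc n,
      (∀ t ∈ Set.Icc (0:ℝ) ε, ξ t ∈ f ⁻¹' edom ϑ) ∧ ξ 0 = xb ∧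
      Tendsto (fun t : ℝ => t⁻¹ • (ξ t - xb)) (𝓝[>] (0:ℝ)) (𝓝 w) ∧
      Tendsto (fun t : ℝ => (2 / t ^ 2) • (ξ t - xb - t • w)) (𝓝[>] (0:ℝ)) (𝓝 z) := by
  classical
  have harc : ∀ᶠ s in 𝓝[>] (0:ℝ),
      f xb + s • (fderiv ℝ f xb w) + (s^2/2) • (fderiv ℝ f xb z + D2 f xb w) ∈ edom ϑ :=
    dom_arc hplq hz
  set X : ℝ → Euc n := fun t => xb + t • w + (t^2/2) • z with hXdef
  have hXcont : Tendsto X (𝓝[>] (0:ℝ)) (𝓝 xb) := by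
    have hc : Continuous X := by
      apply Continuous.add
      apply Continuous.add continuous_const
      · exact continuous_id.smul continuous_const
      · exact ((continuous_id.pow 2).div_const 2).smul continuous_const
    have := (hc.tendsto 0).mono_left (nhdsWithin_le_nhds (s := Set.Ioi (0:ℝ)))
    simpa [hXdef] using this
  have hrem : ∀ ε > (0:ℝ), ∀ᶠ t in 𝓝[>] (0:ℝ),
      ‖f (X t) - (f xb + t • (fderiv ℝ f xb w)
        + (t^2/2) • (fderiv ℝ f xb z + D2 f xb w))‖ ≤ ε * t^2 := by
    intro ε hε
    filter_upwards [rem_bound hf w z hε] with t ht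
    have hXV : X t = xb + (t • w + (t^2/2) • z) := by
      simp only [hXdef]; abel
    rw [hXV]
    exact ht
  have hxbΩ : xb ∈ f ⁻¹' edom ϑ := hdom
  have hDist : ∀ ε > (0:ℝ), ∀ᶠ t in 𝓝[>] (0:ℝ),
      infDist (X t) (f ⁻¹' edom ϑ) ≤ ε * t^2 := by
    intro ε hε
    have hκ0 := hmsqc.1
    have hκ1 : (0:ℝ) < κ + 1 := by linarith
    have h1 := hXcont.eventually hmsqc.2
    have h2 := hrem (ε/(κ+1)) (by positivity)
    filter_upwards [h1, h2, harc] with t hAt hBt hCt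
    have h3 : infDist (f (X t)) (edom ϑ)
        ≤ ‖f (X t) - (f xb + t • (fderiv ℝ f xb w)
            + (t^2/2) • (fderiv ℝ f xb z + D2 f xb w))‖ := by
      have := infDist_le_dist_of_mem (x := f (X t)) hCt
      rwa [dist_eq_norm] at this
    have key : κ * (ε/(κ+1)) ≤ ε := by
      rw [← mul_div_assoc, div_le_iff₀ hκ1]
      nlinarith
    calc infDist (X t) (f ⁻¹' edom ϑ) ≤ κ * infDist (f (X t)) (edom ϑ) := hAt
    _ ≤ κ * (ε/(κ+1) * t^2) := mul_le_mul_of_nonneg_left (h3.trans hBt) hκ0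
    _ ≤ ε * t^2 := by nlinarith [mul_le_mul_of_nonneg_right key (sq_nonneg t)]
  have ex : ∀ t : ℝ, 0 < t →
      ∃ p ∈ f ⁻¹' edom ϑ, dist (X t) p < infDist (X t) (f ⁻¹' edom ϑ) + t^3 := by
    intro t ht
    apply (infDist_lt_iff ⟨xb, hxbΩ⟩).1
    have : (0:ℝ) < t^3 := pow_pos ht 3
    linarith
  set ξ : ℝ → Euc n := fun t => if ht : 0 < t then (ex t ht).choose else xb with hξdef
  have hξΩ : ∀ t, 0 < t → ξ t ∈ f ⁻¹' edom ϑ := by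
    intro t ht
    simp only [hξdef, dif_pos ht]
    exact (ex t ht).choose_spec.1
  have hξ0 : ξ 0 = xb := by simp [hξdef]
  have hξd : ∀ t, 0 < t → ‖ξ t - X t‖ ≤ infDist (X t) (f ⁻¹' edom ϑ) + t^3 := by
    intro t ht
    have h := (ex t ht).choose_spec.2
    have heq : ‖ξ t - X t‖ = dist (X t) (ex t ht).choose := by
      rw [dist_eq_norm, ← norm_neg]
      simp only [hξdef, dif_pos ht]
      congr 1
      abel
    rw [heq]
    exact le_of_lt h
  have hE : ∀ ε > (0:ℝ), ∀ᶠ t in 𝓝[>] (0:ℝ), ‖ξ t - X t‖ ≤ ε * t^2 := by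
    intro ε hε
    have hIoc : Set.Ioc (0:ℝ) (ε/2) ∈ 𝓝[>] (0:ℝ) :=
      Ioc_mem_nhdsGT_of_mem ⟨le_refl 0, by positivity⟩
    filter_upwards [hDist (ε/2) (by positivity), hIoc] with t h1 h2
    obtain ⟨ht0, htε⟩ := h2
    have := hξd t ht0
    nlinarith [pow_pos ht0 3, sq_nonneg t, mul_pos ht0 ht0]
  have hXsub : ∀ t : ℝ, X t - xb = t • w + (t^2/2) • z := by
    intro t; simp only [hXdef]; abel
  have halg1 : ∀ t : ℝ, 0 < t →
      t⁻¹ • (ξ t - xb) - w = t⁻¹ • (ξ t - X t) + (t/2) • z := by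
    intro t ht
    have hsplit : ξ t - xb = (ξ t - X t) + (X t - xb) := by abel
    rw [hsplit, smul_add, hXsub, smul_add, smul_smul, smul_smul,
      inv_mul_cancel₀ (ne_of_gt ht), one_smul]
    have hc : t⁻¹ * (t^2/2) = t/2 := by field_simp
    rw [hc]
    abel
  have halg2 : ∀ t : ℝ, 0 < t →
      (2 / t^2) • (ξ t - xb - t • w) - z = (2 / t^2) • (ξ t - X t) := by
    intro t ht
    have hsplit : ξ t - xb - t • w = (ξ t - X t) + (t^2/2) • z := by
      rw [show ξ t - xb - t • w = (ξ t - X t) + (X t - xb - t • w) by abel, hXsub]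
      abel
    rw [hsplit, smul_add, smul_smul]
    have hc : 2 / t^2 * (t^2/2) = 1 := by field_simp
    rw [hc, one_smul]
    abel
  have L1 : Tendsto (fun t : ℝ => t⁻¹ • (ξ t - xb)) (𝓝[>] (0:ℝ)) (𝓝 w) := by
    rw [Metric.tendsto_nhds]
    intro ε hε
    have hδpos : (0:ℝ) < min 1 (ε / (‖z‖ + 1)) := lt_min one_pos (by positivity)
    have hIoc : Set.Ioc (0:ℝ) (min 1 (ε / (‖z‖ + 1))) ∈ 𝓝[>] (0:ℝ) :=
      Ioc_mem_nhdsGT_of_mem ⟨le_refl 0, hδpos⟩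
    filter_upwards [hE (ε/4) (by positivity), hIoc] with t h1 h2
    obtain ⟨ht0, htδ⟩ := h2
    have ht1 : t ≤ 1 := htδ.trans (min_le_left _ _)
    have htz : t ≤ ε / (‖z‖ + 1) := htδ.trans (min_le_right _ _)
    rw [dist_eq_norm, halg1 t ht0]
    have hb1 : ‖t⁻¹ • (ξ t - X t)‖ ≤ ε/4 * t := by
      rw [norm_smul, Real.norm_eq_abs, abs_of_pos (inv_pos.2 ht0)]
      have hmul := mul_le_mul_of_nonneg_left h1 (le_of_lt (inv_pos.2 ht0))
      have h5 : t⁻¹ * (ε/4 * t^2) = ε/4 * t := by field_simp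
      linarith [h5 ▸ hmul]
    have hb2 : ‖(t/2) • z‖ ≤ ε/2 := by
      rw [norm_smul, Real.norm_eq_abs, abs_of_pos (by positivity : (0:ℝ) < t/2)]
      have h6 : t * (‖z‖ + 1) ≤ ε := by
        rw [← le_div_iff₀ (by positivity : (0:ℝ) < ‖z‖ + 1)]
        exact htz
      nlinarith [norm_nonneg z]
    calc ‖t⁻¹ • (ξ t - X t) + (t/2) • z‖ ≤ ‖t⁻¹ • (ξ t - X t)‖ + ‖(t/2) • z‖ :=
      norm_add_le _ _
    _ ≤ ε/4 * t + ε/2 := by linarith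
    _ < ε := by nlinarith
  have L2 : Tendsto (fun t : ℝ => (2 / t^2) • (ξ t - xb - t • w)) (𝓝[>] (0:ℝ)) (𝓝 z) := by
    rw [Metric.tendsto_nhds]
    intro ε hε
    filter_upwards [hE (ε/4) (by positivity), self_mem_nhdsWithin] with t h1 ht0'
    have ht0 : (0:ℝ) < t := ht0'
    rw [dist_eq_norm, halg2 t ht0]
    rw [norm_smul, Real.norm_eq_abs, abs_of_pos (by positivity : (0:ℝ) < 2/t^2)]
    have hmul := mul_le_mul_of_nonneg_left h1 (le_of_lt (by positivity : (0:ℝ) < 2/t^2))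
    have h5 : 2/t^2 * (ε/4 * t^2) = ε/2 := by field_simp; ring
    nlinarith [h5 ▸ hmul]
  have hzmem : z ∈ secondTangent (f ⁻¹' edom ϑ) xb w := by
    have htk0 : ∀ k : ℕ, (0:ℝ) < 1 / (k + 1 : ℝ) := fun k => by positivity
    have htklim : Tendsto (fun k : ℕ => 1 / (k + 1 : ℝ)) atTop (𝓝 0) :=
      tendsto_one_div_add_atTop_nhds_zero_nat
    have htkin : Tendsto (fun k : ℕ => 1 / (k + 1 : ℝ)) atTop (𝓝[>] (0:ℝ)) :=
      tendsto_nhdsWithin_of_tendsto_nhds_of_eventually_within _ htklim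
        (Eventually.of_forall fun k => htk0 k)
    refine ⟨fun k => 1 / (k + 1 : ℝ),
      fun k => (2 / (1 / (k + 1 : ℝ))^2) • (ξ (1 / (k + 1 : ℝ)) - xb - (1 / (k + 1 : ℝ)) • w),
      htk0, htklim, L2.comp htkin, ?_⟩
    intro k
    set s : ℝ := 1 / (k + 1 : ℝ) with hsdef
    have hs0 : 0 < s := htk0 k
    have hcancel : (s^2/2) • ((2 / s^2) • (ξ s - xb - s • w)) = ξ s - xb - s • w := by
      rw [smul_smul]
      have hc : s^2/2 * (2 / s^2) = 1 := by field_simp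
      rw [hc, one_smul]
    rw [hcancel]
    have heq : xb + s • w + (ξ s - xb - s • w) = ξ s := by abel
    rw [heq]
    exact hξΩ s hs0
  refine ⟨hzmem, 1, one_pos, ξ, ?_, hξ0, L1, L2⟩
  intro t ht
  rcases eq_or_lt_of_le ht.1 with h0 | h0
  · rw [← h0, hξ0]; exact hxbΩ
  · exact hξΩ t h0
end
end
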